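/- arXiv:2108.10573 — 7 statements merged into one kernel-verified Lean document; each statement's English description precedes it below -/
import Mathlib

section
/- Let S₁, S₂ ⊆ Fin n be disjoint with S₂ nonempty, let r₁, r₂, a₁, a₂, b ∈ ℝ and ε₁ ≥ 0. Let h₁ be a real-valued function on the hypercube {-1,1}^n that depends only on the coordinates in S₁, satisfies E[h₁·χ_{S₁}] = 0, and satisfies |h₁(x)| ≤ |r₁|·ε₁ for all x. Define f_v(x) = b + (a₁·(r₁·χ_{S₁}(x) + h₁(x)) + a₂·r₂·χ_{S₂}(x))². Then f_v(x) = r·χ_{S₁ ∪ S₂}(x) + h(x) where r = 2·r₁·r₂·a₁·a₂, the function h satisfies E[h·χ_{S₁ ∪ S₂}] = 0, and for every x, |h(x)| ≤ |b + (r₁·a₁)² + (r₂·a₂)²| + 2·ε₁·|r₁·a₁|·(|r₁·a₁|·(1 + ε₁) + |r₂·a₂|). -/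
/-- The Walsh monomial `χ_S(x) = ∏_{i ∈ S} x i`. -/
noncomputable def walsh {n : ℕ} (S : Finset (Fin n)) (x : Fin n → ℝ) : ℝ :=
  ∏ i ∈ S, x i

/-- Expectation over the uniform distribution on the hypercube `{-1,1}^n`. -/
noncomputable def hypE {n : ℕ} (F : (Fin n → ℝ) → ℝ) : ℝ :=
  (2 ^ n : ℝ)⁻¹ * ∑ σ : Fin n → Bool, F (fun i => if σ i then 1 else -1)

lemma pt_cube {n : ℕ} (σ : Fin n → Bool) :
    ∀ i, (if σ i then (1:ℝ) else -1) = 1 ∨ (if σ i then (1:ℝ) else -1) = -1 := by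
  intro i; by_cases h : σ i <;> simp [h]

lemma walsh_pm {n : ℕ} (S : Finset (Fin n)) (x : Fin n → ℝ)
    (hx : ∀ i, x i = 1 ∨ x i = -1) : walsh S x = 1 ∨ walsh S x = -1 := by
  classical
  unfold walsh
  induction S using Finset.induction_on with
  | empty => simp
  | @insert a s ha ih =>
    rw [Finset.prod_insert ha]
    rcases hx a with h1 | h1 <;> rcases ih with h2 | h2 <;> simp [h1, h2]

/-- Key orthogonality: if `g` depends only on coordinates in `S₁` (on the hypercube)
and `S₂` is nonempty and disjoint from `S₁`, then `∑ g · χ_{S₂} = 0`. -/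
lemma sum_mul_walsh_eq_zero {n : ℕ} (S₁ S₂ : Finset (Fin n)) (hdisj : Disjoint S₁ S₂)
    (hne : S₂.Nonempty) (g : (Fin n → ℝ) → ℝ)
    (hdep : ∀ x y : Fin n → ℝ, (∀ i, x i = 1 ∨ x i = -1) → (∀ i, y i = 1 ∨ y i = -1) →
      (∀ i ∈ S₁, x i = y i) → g x = g y) :
    ∑ σ : Fin n → Bool,
      g (fun i => if σ i then 1 else -1) * walsh S₂ (fun i => if σ i then 1 else -1) = 0 := by
  classical
  obtain ⟨j, hj⟩ := hne
  have hjS₁ : j ∉ S₁ := fun h => (Finset.disjoint_left.mp hdisj h) hj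
  apply Finset.sum_ninvolution (fun σ => Function.update σ j (!σ j))
  · intro σ
    set x : Fin n → ℝ := fun i => if σ i then 1 else -1 with hx
    set y : Fin n → ℝ := fun i => if Function.update σ j (!σ j) i then 1 else -1 with hy
    have hxy : ∀ i, i ≠ j → x i = y i := by
      intro i hi
      simp [hx, hy, Function.update_of_ne hi]
    have hgy : g y = g x := by
      apply hdep _ _ (pt_cube _) (pt_cube _)
      intro i hiS₁
      exact (hxy i (fun h => hjS₁ (h ▸ hiS₁))).symm
    have hyj : y j = - x j := by
      simp only [hx, hy, Function.update_self]
      cases σ j <;> norm_num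
    have hw : walsh S₂ y = - walsh S₂ x := by
      unfold walsh
      rw [← Finset.mul_prod_erase S₂ _ hj, ← Finset.mul_prod_erase S₂ _ hj, hyj]
      have : ∏ i ∈ S₂.erase j, y i = ∏ i ∈ S₂.erase j, x i := by
        apply Finset.prod_congr rfl
        intro i hi
        exact (hxy i (Finset.ne_of_mem_erase hi)).symm
      rw [this]; ring
    rw [hgy, hw]; ring
  · intro σ _
    intro h
    have := congrFun h j
    simp at this
  · intro σ; exact Finset.mem_univ _
  · intro σ
    funext i
    by_cases hi : i = j
    · subst hi; simp
    · simp [Function.update_of_ne hi]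

lemma hypE_mul_walsh_eq_zero {n : ℕ} (S₁ S₂ : Finset (Fin n)) (hdisj : Disjoint S₁ S₂)
    (hne : S₂.Nonempty) (g : (Fin n → ℝ) → ℝ)
    (hdep : ∀ x y : Fin n → ℝ, (∀ i, x i = 1 ∨ x i = -1) → (∀ i, y i = 1 ∨ y i = -1) →
      (∀ i ∈ S₁, x i = y i) → g x = g y) :
    hypE (fun x => g x * walsh S₂ x) = 0 := by
  unfold hypE
  rw [sum_mul_walsh_eq_zero S₁ S₂ hdisj hne g hdep, mul_zero]

/-- A quadratic neuron with inputs `r₁·χ_{S₁} + h₁` and `r₂·χ_{S₂}` computes the product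
monomial `χ_{S₁ ∪ S₂}` with scaling `2·r₁·r₂·a₁·a₂` up to a noise term `h` that is
uncorrelated with `χ_{S₁ ∪ S₂}` and pointwise bounded. -/
theorem neuron_computes_product_monomial (n : ℕ) (S₁ S₂ : Finset (Fin n))
    (hdisj : Disjoint S₁ S₂) (hne : S₂.Nonempty)
    (r₁ r₂ a₁ a₂ b ε₁ : ℝ) (hε₁ : 0 ≤ ε₁)
    (h₁ : (Fin n → ℝ) → ℝ)
    (hdep : ∀ x y : Fin n → ℝ, (∀ i, x i = 1 ∨ x i = -1) → (∀ i, y i = 1 ∨ y i = -1) →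
      (∀ i ∈ S₁, x i = y i) → h₁ x = h₁ y)
    (hmean : hypE (fun x => h₁ x * walsh S₁ x) = 0)
    (hbd : ∀ x : Fin n → ℝ, (∀ i, x i = 1 ∨ x i = -1) → |h₁ x| ≤ |r₁| * ε₁) :
    hypE (fun x =>
        ((b + (a₁ * (r₁ * walsh S₁ x + h₁ x) + a₂ * r₂ * walsh S₂ x) ^ 2)
            - (2 * r₁ * r₂ * a₁ * a₂) * walsh (S₁ ∪ S₂) x) * walsh (S₁ ∪ S₂) x) = 0 ∧
    ∀ x : Fin n → ℝ, (∀ i, x i = 1 ∨ x i = -1) →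
      |(b + (a₁ * (r₁ * walsh S₁ x + h₁ x) + a₂ * r₂ * walsh S₂ x) ^ 2)
          - (2 * r₁ * r₂ * a₁ * a₂) * walsh (S₁ ∪ S₂) x|
        ≤ |b + (r₁ * a₁) ^ 2 + (r₂ * a₂) ^ 2|
          + 2 * ε₁ * |r₁ * a₁| * (|r₁ * a₁| * (1 + ε₁) + |r₂ * a₂|) := by
  classical
  have hwu : ∀ x : Fin n → ℝ, walsh (S₁ ∪ S₂) x = walsh S₁ x * walsh S₂ x := by
    intro x; unfold walsh; exact Finset.prod_union hdisj
  set C : ℝ := b + (r₁ * a₁) ^ 2 + (r₂ * a₂) ^ 2 with hC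
  -- pointwise decomposition on the hypercube
  have hpt : ∀ x : Fin n → ℝ, (∀ i, x i = 1 ∨ x i = -1) →
      ((b + (a₁ * (r₁ * walsh S₁ x + h₁ x) + a₂ * r₂ * walsh S₂ x) ^ 2)
          - (2 * r₁ * r₂ * a₁ * a₂) * walsh (S₁ ∪ S₂) x) * walsh (S₁ ∪ S₂) x
      = C * (walsh S₁ x * walsh S₂ x)
        + (2 * a₁ ^ 2 * r₁) * (h₁ x * walsh S₂ x)
        + a₁ ^ 2 * ((h₁ x ^ 2 * walsh S₁ x) * walsh S₂ x)
        + (2 * a₁ * a₂ * r₂) * (h₁ x * walsh S₁ x) := by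
    intro x hx
    rw [hwu]
    rcases walsh_pm S₁ x hx with h1 | h1 <;> rcases walsh_pm S₂ x hx with h2 | h2 <;>
      rw [h1, h2] <;> ring
  constructor
  · unfold hypE
    rw [mul_eq_zero]; right
    calc ∑ σ : Fin n → Bool,
          ((b + (a₁ * (r₁ * walsh S₁ (fun i => if σ i then 1 else -1)
              + h₁ (fun i => if σ i then 1 else -1))
              + a₂ * r₂ * walsh S₂ (fun i => if σ i then 1 else -1)) ^ 2)
            - (2 * r₁ * r₂ * a₁ * a₂) * walsh (S₁ ∪ S₂) (fun i => if σ i then 1 else -1))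
            * walsh (S₁ ∪ S₂) (fun i => if σ i then 1 else -1)
        = ∑ σ : Fin n → Bool,
            (C * (walsh S₁ (fun i => if σ i then 1 else -1)
                * walsh S₂ (fun i => if σ i then 1 else -1))
            + (2 * a₁ ^ 2 * r₁) * (h₁ (fun i => if σ i then 1 else -1)
                * walsh S₂ (fun i => if σ i then 1 else -1))
            + a₁ ^ 2 * ((h₁ (fun i => if σ i then 1 else -1) ^ 2
                * walsh S₁ (fun i => if σ i then 1 else -1))
                * walsh S₂ (fun i => if σ i then 1 else -1))
            + (2 * a₁ * a₂ * r₂) * (h₁ (fun i => if σ i then 1 else -1)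
                * walsh S₁ (fun i => if σ i then 1 else -1))) := by
          exact Finset.sum_congr rfl fun σ _ => hpt _ (pt_cube σ)
      _ = 0 := by
          rw [Finset.sum_add_distrib, Finset.sum_add_distrib, Finset.sum_add_distrib,
            ← Finset.mul_sum, ← Finset.mul_sum, ← Finset.mul_sum, ← Finset.mul_sum]
          have e1 : ∑ σ : Fin n → Bool,
              (walsh S₁ (fun i => if σ i then 1 else -1)
                * walsh S₂ (fun i => if σ i then 1 else -1)) = 0 := by
            apply sum_mul_walsh_eq_zero S₁ S₂ hdisj hne
            intro x y hx hy hxy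
            exact Finset.prod_congr rfl hxy
          have e2 : ∑ σ : Fin n → Bool,
              (h₁ (fun i => if σ i then 1 else -1)
                * walsh S₂ (fun i => if σ i then 1 else -1)) = 0 := by
            apply sum_mul_walsh_eq_zero S₁ S₂ hdisj hne
            exact hdep
          have e3 : ∑ σ : Fin n → Bool,
              ((h₁ (fun i => if σ i then 1 else -1) ^ 2
                * walsh S₁ (fun i => if σ i then 1 else -1))
                * walsh S₂ (fun i => if σ i then 1 else -1)) = 0 := by
            apply sum_mul_walsh_eq_zero S₁ S₂ hdisj hne (fun x => h₁ x ^ 2 * walsh S₁ x)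
            intro x y hx hy hxy
            rw [hdep x y hx hy hxy]
            unfold walsh
            rw [Finset.prod_congr rfl hxy]
          have e4 : ∑ σ : Fin n → Bool,
              (h₁ (fun i => if σ i then 1 else -1)
                * walsh S₁ (fun i => if σ i then 1 else -1)) = 0 := by
            unfold hypE at hmean
            rcases mul_eq_zero.mp hmean with h | h
            · exact absurd h (by positivity)
            · exact h
          rw [e1, e2, e3, e4]; ring
  · intro x hx
    set c₁ := walsh S₁ x with hc₁
    set c₂ := walsh S₂ x with hc₂
    set e := h₁ x with he
    have hbe : |e| ≤ |r₁| * ε₁ := hbd x hx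
    have heq : (b + (a₁ * (r₁ * c₁ + e) + a₂ * r₂ * c₂) ^ 2)
        - (2 * r₁ * r₂ * a₁ * a₂) * walsh (S₁ ∪ S₂) x
        = C + a₁ ^ 2 * e ^ 2 + 2 * a₁ ^ 2 * r₁ * c₁ * e + 2 * a₁ * a₂ * r₂ * e * c₂ := by
      rw [hwu, ← hc₁, ← hc₂]
      rcases walsh_pm S₁ x hx with h1 | h1 <;> rcases walsh_pm S₂ x hx with h2 | h2 <;>
        rw [← hc₁] at h1 <;> rw [← hc₂] at h2 <;> rw [h1, h2, hC] <;> ring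
    rw [heq]
    have hac₁ : |c₁| = 1 := by
      rcases walsh_pm S₁ x hx with h1 | h1 <;> rw [← hc₁] at h1 <;> rw [h1] <;> norm_num
    have hac₂ : |c₂| = 1 := by
      rcases walsh_pm S₂ x hx with h2 | h2 <;> rw [← hc₂] at h2 <;> rw [h2] <;> norm_num
    have tri : |C + a₁ ^ 2 * e ^ 2 + 2 * a₁ ^ 2 * r₁ * c₁ * e + 2 * a₁ * a₂ * r₂ * e * c₂|
        ≤ |C| + |a₁ ^ 2 * e ^ 2| + |2 * a₁ ^ 2 * r₁ * c₁ * e| + |2 * a₁ * a₂ * r₂ * e * c₂| :=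
      calc |C + a₁ ^ 2 * e ^ 2 + 2 * a₁ ^ 2 * r₁ * c₁ * e + 2 * a₁ * a₂ * r₂ * e * c₂|
          ≤ |C + a₁ ^ 2 * e ^ 2 + 2 * a₁ ^ 2 * r₁ * c₁ * e| + |2 * a₁ * a₂ * r₂ * e * c₂| :=
            abs_add_le _ _
        _ ≤ |C + a₁ ^ 2 * e ^ 2| + |2 * a₁ ^ 2 * r₁ * c₁ * e| + |2 * a₁ * a₂ * r₂ * e * c₂| := by
            have := abs_add_le (C + a₁ ^ 2 * e ^ 2) (2 * a₁ ^ 2 * r₁ * c₁ * e); linarith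
        _ ≤ |C| + |a₁ ^ 2 * e ^ 2| + |2 * a₁ ^ 2 * r₁ * c₁ * e| + |2 * a₁ * a₂ * r₂ * e * c₂| := by
            have := abs_add_le C (a₁ ^ 2 * e ^ 2); linarith
    have hA : |a₁ ^ 2 * e ^ 2| ≤ (r₁ * a₁) ^ 2 * ε₁ ^ 2 := by
      rw [abs_mul, abs_of_nonneg (sq_nonneg a₁), abs_of_nonneg (sq_nonneg e)]
      have h3 : e ^ 2 ≤ r₁ ^ 2 * ε₁ ^ 2 := by
        have := pow_le_pow_left₀ (abs_nonneg e) hbe 2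
        rw [sq_abs, mul_pow, sq_abs] at this
        exact this
      nlinarith [mul_le_mul_of_nonneg_left h3 (sq_nonneg a₁)]
    have hB : |2 * a₁ ^ 2 * r₁ * c₁ * e| ≤ 2 * (r₁ * a₁) ^ 2 * ε₁ := by
      rw [abs_mul, abs_mul, abs_mul, hac₁, mul_one]
      have h2 : |2 * a₁ ^ 2| = 2 * a₁ ^ 2 := abs_of_nonneg (by positivity)
      rw [h2]
      calc 2 * a₁ ^ 2 * |r₁| * |e| ≤ 2 * a₁ ^ 2 * |r₁| * (|r₁| * ε₁) := by
            apply mul_le_mul_of_nonneg_left hbe (by positivity)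
        _ = |r₁| * |r₁| * (2 * a₁ ^ 2 * ε₁) := by ring
        _ = 2 * (r₁ * a₁) ^ 2 * ε₁ := by rw [abs_mul_abs_self]; ring
    have hCb : |2 * a₁ * a₂ * r₂ * e * c₂| ≤ 2 * ε₁ * |r₁ * a₁| * |r₂ * a₂| := by
      rw [abs_mul, abs_mul, hac₂, mul_one]
      have h2 : |2 * a₁ * a₂ * r₂| = 2 * |a₁| * |r₂ * a₂| := by
        rw [abs_mul, abs_mul, abs_mul]
        simp [abs_mul]; ring
      rw [h2]
      calc 2 * |a₁| * |r₂ * a₂| * |e| ≤ 2 * |a₁| * |r₂ * a₂| * (|r₁| * ε₁) := by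
            apply mul_le_mul_of_nonneg_left hbe (by positivity)
        _ = 2 * ε₁ * (|r₁| * |a₁|) * |r₂ * a₂| := by ring
        _ = 2 * ε₁ * |r₁ * a₁| * |r₂ * a₂| := by rw [← abs_mul]
    have hsq : |r₁ * a₁| ^ 2 = (r₁ * a₁) ^ 2 := sq_abs _
    nlinarith [tri, hA, hB, hCb, sq_nonneg (r₁ * a₁), mul_nonneg hε₁ hε₁,
      mul_nonneg (mul_nonneg hε₁ hε₁) (sq_nonneg (r₁ * a₁))]
end

section
/- Let r₁, r₂, z_S, z₀, a₁, a₂, b ∈ ℝ, γ₁, γ₂ > 0, ε_stat ≥ 0, U ≥ 0. Assume the approximate stationarity conditions: (i) |(r₁·a₁)² + (r₂·a₂)² + b + z₀| ≤ ε_stat; (ii) |(2·r₁·r₂·a₁·a₂ + z_S)·(2·r₁·r₂·a₂) + ((r₁·a₁)² + (r₂·a₂)² + b + z₀)·(2·r₁²·a₁) + γ₁·a₁| ≤ ε_stat; (iii) |(2·r₁·r₂·a₁·a₂ + z_S)·(2·r₁·r₂·a₁) + ((r₁·a₁)² + (r₂·a₂)² + b + z₀)·(2·r₂²·a₂) + γ₂·a₂|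 ≤ ε_stat; and (iv) |a₁| ≤ U and |a₂| ≤ U. Set ρ = (2·r₁·r₂·a₁·a₂ + z_S)·(2·r₁·r₂) and ε' = (1 + 2·max(r₁², r₂²)·U)·ε_stat. Then |ρ·a₂ + γ₁·a₁| ≤ ε', |ρ·a₁ + γ₂·a₂| ≤ ε', |γ₁·γ₂ − ρ²|·|a₁| ≤ (γ₂ + |ρ|)·ε', and |γ₁·γ₂ − ρ²|·|a₂| ≤ (γ₁ + |ρ|)·ε'. -/
/-- First-order consequences of approximate stationarity of the regularized idealized loss
for a neuron with two active inputs. -/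
theorem stationarity_first_order_conditions
    (r₁ r₂ zS z₀ a₁ a₂ b γ₁ γ₂ εstat U : ℝ)
    (hγ₁ : 0 < γ₁) (hγ₂ : 0 < γ₂) (hε : 0 ≤ εstat) (hU : 0 ≤ U)
    (h1 : |(r₁ * a₁) ^ 2 + (r₂ * a₂) ^ 2 + b + z₀| ≤ εstat)
    (h2 : |(2 * r₁ * r₂ * a₁ * a₂ + zS) * (2 * r₁ * r₂ * a₂)
        + ((r₁ * a₁) ^ 2 + (r₂ * a₂) ^ 2 + b + z₀) * (2 * r₁ ^ 2 * a₁)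
        + γ₁ * a₁| ≤ εstat)
    (h3 : |(2 * r₁ * r₂ * a₁ * a₂ + zS) * (2 * r₁ * r₂ * a₁)
        + ((r₁ * a₁) ^ 2 + (r₂ * a₂) ^ 2 + b + z₀) * (2 * r₂ ^ 2 * a₂)
        + γ₂ * a₂| ≤ εstat)
    (h4 : |a₁| ≤ U) (h5 : |a₂| ≤ U) :
    |(2 * r₁ * r₂ * a₁ * a₂ + zS) * (2 * r₁ * r₂) * a₂ + γ₁ * a₁|
        ≤ (1 + 2 * max (r₁ ^ 2) (r₂ ^ 2) * U) * εstat ∧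
    |(2 * r₁ * r₂ * a₁ * a₂ + zS) * (2 * r₁ * r₂) * a₁ + γ₂ * a₂|
        ≤ (1 + 2 * max (r₁ ^ 2) (r₂ ^ 2) * U) * εstat ∧
    |γ₁ * γ₂ - ((2 * r₁ * r₂ * a₁ * a₂ + zS) * (2 * r₁ * r₂)) ^ 2| * |a₁|
        ≤ (γ₂ + |(2 * r₁ * r₂ * a₁ * a₂ + zS) * (2 * r₁ * r₂)|)
          * ((1 + 2 * max (r₁ ^ 2) (r₂ ^ 2) * U) * εstat) ∧
    |γ₁ * γ₂ - ((2 * r₁ * r₂ * a₁ * a₂ + zS) * (2 * r₁ * r₂)) ^ 2| * |a₂|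
        ≤ (γ₁ + |(2 * r₁ * r₂ * a₁ * a₂ + zS) * (2 * r₁ * r₂)|)
          * ((1 + 2 * max (r₁ ^ 2) (r₂ ^ 2) * U) * εstat) := by

  set D := (r₁ * a₁) ^ 2 + (r₂ * a₂) ^ 2 + b + z₀ with hD
  set ρ := (2 * r₁ * r₂ * a₁ * a₂ + zS) * (2 * r₁ * r₂) with hρ
  set M := max (r₁ ^ 2) (r₂ ^ 2) with hM
  have hM1 : r₁ ^ 2 ≤ M := le_max_left _ _
  have hM2 : r₂ ^ 2 ≤ M := le_max_right _ _
  have hMn : 0 ≤ M := le_trans (sq_nonneg r₁) hM1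
  have key : ∀ (r a γa : ℝ), r ^ 2 ≤ M → |a| ≤ U →
      |γa + D * (2 * r ^ 2 * a)| ≤ εstat →
      |γa| ≤ (1 + 2 * M * U) * εstat := by
    intro r a γa hr ha h
    have h6 : |D * (2 * r ^ 2 * a)| ≤ 2 * M * U * εstat := by
      rw [abs_mul, abs_mul, abs_mul]
      have : |(2:ℝ)| * |r ^ 2| * |a| ≤ 2 * M * U := by
        rw [abs_two, abs_of_nonneg (sq_nonneg r)]
        have := mul_le_mul hr ha (abs_nonneg a) hMn
        linarith
      calc |D| * (|2| * |r ^ 2| * |a|) ≤ εstat * (2 * M * U) :=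
            mul_le_mul h1 this (by positivity) hε
        _ = 2 * M * U * εstat := by ring
    calc |γa| = |(γa + D * (2 * r ^ 2 * a)) + -(D * (2 * r ^ 2 * a))| := by ring_nf
      _ ≤ |γa + D * (2 * r ^ 2 * a)| + |-(D * (2 * r ^ 2 * a))| := abs_add_le _ _
      _ ≤ εstat + 2 * M * U * εstat := by rw [abs_neg]; exact add_le_add h h6
      _ = (1 + 2 * M * U) * εstat := by ring
  have e1 : |ρ * a₂ + γ₁ * a₁| ≤ (1 + 2 * M * U) * εstat := by
    refine key r₁ a₁ (ρ * a₂ + γ₁ * a₁) hM1 h4 ?_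
    have : ρ * a₂ + γ₁ * a₁ + D * (2 * r₁ ^ 2 * a₁)
        = (2 * r₁ * r₂ * a₁ * a₂ + zS) * (2 * r₁ * r₂ * a₂)
          + D * (2 * r₁ ^ 2 * a₁) + γ₁ * a₁ := by rw [hρ]; ring
    rw [this]; exact h2
  have e2 : |ρ * a₁ + γ₂ * a₂| ≤ (1 + 2 * M * U) * εstat := by
    refine key r₂ a₂ (ρ * a₁ + γ₂ * a₂) hM2 h5 ?_
    have : ρ * a₁ + γ₂ * a₂ + D * (2 * r₂ ^ 2 * a₂)
        = (2 * r₁ * r₂ * a₁ * a₂ + zS) * (2 * r₁ * r₂ * a₁)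
          + D * (2 * r₂ ^ 2 * a₂) + γ₂ * a₂ := by rw [hρ]; ring
    rw [this]; exact h3
  refine ⟨by rw [mul_assoc] at e1 ⊢; exact e1, by rw [mul_assoc] at e2 ⊢; exact e2, ?_, ?_⟩
  · have : (γ₁ * γ₂ - ρ ^ 2) * a₁ = γ₂ * (ρ * a₂ + γ₁ * a₁) - ρ * (ρ * a₁ + γ₂ * a₂) := by ring
    calc |γ₁ * γ₂ - ρ ^ 2| * |a₁| = |(γ₁ * γ₂ - ρ ^ 2) * a₁| := (abs_mul _ _).symm
      _ = |γ₂ * (ρ * a₂ + γ₁ * a₁) - ρ * (ρ * a₁ + γ₂ * a₂)| := by rw [this]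
      _ ≤ |γ₂ * (ρ * a₂ + γ₁ * a₁)| + |ρ * (ρ * a₁ + γ₂ * a₂)| := abs_sub _ _
      _ ≤ γ₂ * ((1 + 2 * M * U) * εstat) + |ρ| * ((1 + 2 * M * U) * εstat) := by
          rw [abs_mul, abs_mul, abs_of_pos hγ₂]
          exact add_le_add (mul_le_mul_of_nonneg_left e1 hγ₂.le)
            (mul_le_mul_of_nonneg_left e2 (abs_nonneg ρ))
      _ = (γ₂ + |ρ|) * ((1 + 2 * M * U) * εstat) := by ring
  · have : (γ₁ * γ₂ - ρ ^ 2) * a₂ = γ₁ * (ρ * a₁ + γ₂ * a₂) - ρ * (ρ * a₂ + γ₁ * a₁) := by ring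
    calc |γ₁ * γ₂ - ρ ^ 2| * |a₂| = |(γ₁ * γ₂ - ρ ^ 2) * a₂| := (abs_mul _ _).symm
      _ = |γ₁ * (ρ * a₁ + γ₂ * a₂) - ρ * (ρ * a₂ + γ₁ * a₁)| := by rw [this]
      _ ≤ |γ₁ * (ρ * a₁ + γ₂ * a₂)| + |ρ * (ρ * a₂ + γ₁ * a₁)| := abs_sub _ _
      _ ≤ γ₁ * ((1 + 2 * M * U) * εstat) + |ρ| * ((1 + 2 * M * U) * εstat) := by
          rw [abs_mul, abs_mul, abs_of_pos hγ₁]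
          exact add_le_add (mul_le_mul_of_nonneg_left e2 hγ₁.le)
            (mul_le_mul_of_nonneg_left e1 (abs_nonneg ρ))
      _ = (γ₁ + |ρ|) * ((1 + 2 * M * U) * εstat) := by ring
end

section
/- Let r, z₀, a, b ∈ ℝ, γ > 0, ε ≥ 0, and suppose 4·r²·ε < γ. Assume |(r·a)² + b + z₀| ≤ ε and |((r·a)² + b + z₀)·(2·r²·a) + γ·a| ≤ ε. Then |a| ≤ 2·ε/γ and |b| ≤ |z₀| + ε + r²·(2·ε/γ)². -/
/-- Approximate stationarity of the regularized idealized loss for a neuron with a single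
active input forces both the weight and the bias to be small. -/
theorem single_active_input_stays_blank (r z₀ a b γ ε : ℝ)
    (hγ : 0 < γ) (hε : 0 ≤ ε) (hsmall : 4 * r ^ 2 * ε < γ)
    (h1 : |(r * a) ^ 2 + b + z₀| ≤ ε)
    (h2 : |((r * a) ^ 2 + b + z₀) * (2 * r ^ 2 * a) + γ * a| ≤ ε) :
    |a| ≤ 2 * ε / γ ∧ |b| ≤ |z₀| + ε + r ^ 2 * (2 * ε / γ) ^ 2 := by
  set u := (r * a) ^ 2 + b + z₀ with hu
  have hga : γ * |a| ≤ ε + 2 * r ^ 2 * ε * |a| := by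
    have h3 : |γ * a| ≤ ε + |u| * |2 * r ^ 2 * a| := by
      calc |γ * a| = |(u * (2 * r ^ 2 * a) + γ * a) - u * (2 * r ^ 2 * a)| := by ring_nf
        _ ≤ |u * (2 * r ^ 2 * a) + γ * a| + |u * (2 * r ^ 2 * a)| := abs_sub _ _
        _ ≤ ε + |u| * |2 * r ^ 2 * a| := by rw [abs_mul]; linarith
    have e1 : |γ * a| = γ * |a| := by rw [abs_mul, abs_of_pos hγ]
    have e2 : |2 * r ^ 2 * a| = 2 * r ^ 2 * |a| := by
      rw [abs_mul, abs_of_nonneg (by positivity : (0:ℝ) ≤ 2 * r ^ 2)]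
    rw [e1, e2] at h3
    nlinarith [abs_nonneg a, mul_le_mul_of_nonneg_right h1 (abs_nonneg a)]
  have ha : |a| ≤ 2 * ε / γ := by
    rw [le_div_iff₀ hγ]
    nlinarith [abs_nonneg a]
  refine ⟨ha, ?_⟩
  have ha2 : a ^ 2 ≤ (2 * ε / γ) ^ 2 := by
    rw [← sq_abs]
    exact pow_le_pow_left₀ (abs_nonneg a) ha 2
  have hb : |b| ≤ |u| + |z₀| + r ^ 2 * a ^ 2 := by
    have hbe : b = u - z₀ - r ^ 2 * a ^ 2 := by rw [hu]; ring
    have h4 : 0 ≤ r ^ 2 * a ^ 2 := by positivity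
    rw [hbe]
    cases abs_cases (u - z₀ - r ^ 2 * a ^ 2) with
    | inl h => cases abs_cases u with
      | inl hu1 => cases abs_cases z₀ with
        | inl hz => linarith [h.1, hu1.1, hz.1]
        | inr hz => linarith [h.1, hu1.1, hz.1]
      | inr hu1 => cases abs_cases z₀ with
        | inl hz => linarith [h.1, hu1.1, hz.1]
        | inr hz => linarith [h.1, hu1.1, hz.1]
    | inr h => cases abs_cases u with
      | inl hu1 => cases abs_cases z₀ with
        | inl hz => linarith [h.1, hu1.1, hz.1]
        | inr hz => linarith [h.1, hu1.1, hz.1]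
      | inr hu1 => cases abs_cases z₀ with
        | inl hz => linarith [h.1, hu1.1, hz.1]
        | inr hz => linarith [h.1, hu1.1, hz.1]
  have : r ^ 2 * a ^ 2 ≤ r ^ 2 * (2 * ε / γ) ^ 2 :=
    mul_le_mul_of_nonneg_left ha2 (by positivity)
  linarith
end

section
/- Let r₁, r₂, z_S, z₀, a₁, a₂, b ∈ ℝ, γ₁, γ₂ ∈ (0, 1], ε_stat ≥ 0, U ≥ 0. Assume the approximate stationarity conditions: (i) |(r₁·a₁)² + (r₂·a₂)² + b + z₀| ≤ ε_stat; (ii) |(2·r₁·r₂·a₁·a₂ + z_S)·(2·r₁·r₂·a₂) + ((r₁·a₁)² + (r₂·a₂)² + b + z₀)·(2·r₁²·a₁) + γ₁·a₁| ≤ ε_stat; (iii) the same with the roles of the indices 1 and 2 swapped; (iv) |a₁| ≤ U and |a₂| ≤ U. Set ρ = (2·r₁·r₂·a₁·a₂ + z_S)·(2·r₁·r₂) and ε' = (1 + 2·max(r₁², r₂²)·U)·ε_stat. If additionally |γ₁·γ₂ − ρ²| ≥ γ₁·γ₂/2, then max(|a₁|, |a₂|) ≤ 8·ε'·(1 + U²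 + |z_S|)·max(1, (r₁·r₂)²)/(γ₁·γ₂). -/
set_option maxHeartbeats 1000000


/-- When the product feature is not useful (the determinant condition
`|γ₁γ₂ − ρ²| ≥ γ₁γ₂/2` holds), approximate stationarity of the regularized idealized loss
forces both input weights to be small, so the trained neuron remains blank. -/
theorem two_active_inputs_not_useful_stays_blank
    (r₁ r₂ zS z₀ a₁ a₂ b γ₁ γ₂ εstat U : ℝ)
    (hγ₁ : 0 < γ₁) (hγ₁' : γ₁ ≤ 1) (hγ₂ : 0 < γ₂) (hγ₂' : γ₂ ≤ 1)
    (hε : 0 ≤ εstat) (hU : 0 ≤ U)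
    (h1 : |(r₁ * a₁) ^ 2 + (r₂ * a₂) ^ 2 + b + z₀| ≤ εstat)
    (h2 : |(2 * r₁ * r₂ * a₁ * a₂ + zS) * (2 * r₁ * r₂ * a₂)
        + ((r₁ * a₁) ^ 2 + (r₂ * a₂) ^ 2 + b + z₀) * (2 * r₁ ^ 2 * a₁)
        + γ₁ * a₁| ≤ εstat)
    (h3 : |(2 * r₁ * r₂ * a₁ * a₂ + zS) * (2 * r₁ * r₂ * a₁)
        + ((r₁ * a₁) ^ 2 + (r₂ * a₂) ^ 2 + b + z₀) * (2 * r₂ ^ 2 * a₂)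
        + γ₂ * a₂| ≤ εstat)
    (h4 : |a₁| ≤ U) (h5 : |a₂| ≤ U)
    (hdet : γ₁ * γ₂ / 2 ≤ |γ₁ * γ₂ - ((2 * r₁ * r₂ * a₁ * a₂ + zS) * (2 * r₁ * r₂)) ^ 2|) :
    max |a₁| |a₂|
      ≤ 8 * ((1 + 2 * max (r₁ ^ 2) (r₂ ^ 2) * U) * εstat) * (1 + U ^ 2 + |zS|)
          * max 1 ((r₁ * r₂) ^ 2) / (γ₁ * γ₂) := by
  set S := (r₁ * a₁) ^ 2 + (r₂ * a₂) ^ 2 + b + z₀ with hSdef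
  set ρ := (2 * r₁ * r₂ * a₁ * a₂ + zS) * (2 * r₁ * r₂) with hρdef
  set ε' := (1 + 2 * max (r₁ ^ 2) (r₂ ^ 2) * U) * εstat with hε'def
  set M := max 1 ((r₁ * r₂) ^ 2) with hMdef
  have hM1 : (1:ℝ) ≤ M := le_max_left _ _
  have hM2 : (r₁ * r₂) ^ 2 ≤ M := le_max_right _ _
  have hMpos : (0:ℝ) < M := lt_of_lt_of_le one_pos hM1
  have hmax1 : r₁ ^ 2 ≤ max (r₁ ^ 2) (r₂ ^ 2) := le_max_left _ _
  have hmax2 : r₂ ^ 2 ≤ max (r₁ ^ 2) (r₂ ^ 2) := le_max_right _ _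
  have hmaxnn : (0:ℝ) ≤ max (r₁ ^ 2) (r₂ ^ 2) := le_trans (sq_nonneg r₁) hmax1
  have hε'nn : 0 ≤ ε' := by
    apply mul_nonneg _ hε
    nlinarith
  have hSb : |S| ≤ εstat := h1
  -- bound the S-terms
  have hS1 : |S * (2 * r₁ ^ 2 * a₁)| ≤ 2 * max (r₁ ^ 2) (r₂ ^ 2) * U * εstat := by
    rw [abs_mul]
    have h2a : |2 * r₁ ^ 2 * a₁| ≤ 2 * max (r₁ ^ 2) (r₂ ^ 2) * U := by
      rw [abs_mul]
      have : |(2:ℝ) * r₁ ^ 2| = 2 * r₁ ^ 2 := abs_of_nonneg (by positivity)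
      rw [this]
      nlinarith [abs_nonneg a₁]
    calc |S| * |2 * r₁ ^ 2 * a₁| ≤ εstat * (2 * max (r₁ ^ 2) (r₂ ^ 2) * U) :=
          mul_le_mul hSb h2a (abs_nonneg _) hε
      _ = 2 * max (r₁ ^ 2) (r₂ ^ 2) * U * εstat := by ring
  have hS2 : |S * (2 * r₂ ^ 2 * a₂)| ≤ 2 * max (r₁ ^ 2) (r₂ ^ 2) * U * εstat := by
    rw [abs_mul]
    have h2a : |2 * r₂ ^ 2 * a₂| ≤ 2 * max (r₁ ^ 2) (r₂ ^ 2) * U := by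
      rw [abs_mul]
      have : |(2:ℝ) * r₂ ^ 2| = 2 * r₂ ^ 2 := abs_of_nonneg (by positivity)
      rw [this]
      nlinarith [abs_nonneg a₂]
    calc |S| * |2 * r₂ ^ 2 * a₂| ≤ εstat * (2 * max (r₁ ^ 2) (r₂ ^ 2) * U) :=
          mul_le_mul hSb h2a (abs_nonneg _) hε
      _ = 2 * max (r₁ ^ 2) (r₂ ^ 2) * U * εstat := by ring
  have e1 : |ρ * a₂ + γ₁ * a₁| ≤ ε' := by
    have key : ρ * a₂ + γ₁ * a₁ =
        ((2 * r₁ * r₂ * a₁ * a₂ + zS) * (2 * r₁ * r₂ * a₂)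
          + S * (2 * r₁ ^ 2 * a₁) + γ₁ * a₁) - S * (2 * r₁ ^ 2 * a₁) := by
      rw [hρdef]; ring
    rw [key, sub_eq_add_neg]
    calc |_ + -(S * (2 * r₁ ^ 2 * a₁))| ≤ _ + |-(S * (2 * r₁ ^ 2 * a₁))| := abs_add_le _ _
      _ ≤ εstat + 2 * max (r₁ ^ 2) (r₂ ^ 2) * U * εstat := by
          rw [abs_neg]; exact add_le_add h2 hS1
      _ = ε' := by rw [hε'def]; ring
  have e2 : |ρ * a₁ + γ₂ * a₂| ≤ ε' := by
    have key : ρ * a₁ + γ₂ * a₂ =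
        ((2 * r₁ * r₂ * a₁ * a₂ + zS) * (2 * r₁ * r₂ * a₁)
          + S * (2 * r₂ ^ 2 * a₂) + γ₂ * a₂) - S * (2 * r₂ ^ 2 * a₂) := by
      rw [hρdef]; ring
    rw [key, sub_eq_add_neg]
    calc |_ + -(S * (2 * r₂ ^ 2 * a₂))| ≤ _ + |-(S * (2 * r₂ ^ 2 * a₂))| := abs_add_le _ _
      _ ≤ εstat + 2 * max (r₁ ^ 2) (r₂ ^ 2) * U * εstat := by
          rw [abs_neg]; exact add_le_add h3 hS2
      _ = ε' := by rw [hε'def]; ring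
  -- bound on |ρ|
  have hρb : |ρ| ≤ 4 * M * (U ^ 2 + |zS|) := by
    have h0 : |ρ| = |2 * r₁ * r₂ * a₁ * a₂ + zS| * |2 * r₁ * r₂| := abs_mul _ _
    have htnn : (0:ℝ) ≤ |r₁ * r₂| := abs_nonneg _
    have ht2 : |r₁ * r₂| ^ 2 ≤ M := by rw [sq_abs]; exact hM2
    have h2tM : 2 * |r₁ * r₂| ≤ 2 * M := by nlinarith [sq_nonneg (|r₁ * r₂| - 1)]
    have habs12 : |a₁| * |a₂| ≤ U ^ 2 := by
      nlinarith [abs_nonneg a₁, abs_nonneg a₂]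
    have ht : |2 * r₁ * r₂ * a₁ * a₂ + zS| ≤ 2 * |r₁ * r₂| * U ^ 2 + |zS| := by
      calc |2 * r₁ * r₂ * a₁ * a₂ + zS| ≤ |2 * r₁ * r₂ * a₁ * a₂| + |zS| := abs_add_le _ _
        _ ≤ 2 * |r₁ * r₂| * U ^ 2 + |zS| := by
            have heq : |2 * r₁ * r₂ * a₁ * a₂| = 2 * |r₁ * r₂| * (|a₁| * |a₂|) := by
              rw [show (2 * r₁ * r₂ * a₁ * a₂ : ℝ) = 2 * (r₁ * r₂) * (a₁ * a₂) by ring,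
                abs_mul, abs_mul, abs_mul a₁ a₂, abs_two]
            rw [heq]
            nlinarith
    have h2r : |2 * r₁ * r₂| = 2 * |r₁ * r₂| := by
      rw [show (2 * r₁ * r₂ : ℝ) = 2 * (r₁ * r₂) by ring, abs_mul, abs_two]
    have hmul : |ρ| ≤ (2 * |r₁ * r₂| * U ^ 2 + |zS|) * (2 * |r₁ * r₂|) := by
      rw [h0, h2r]
      exact mul_le_mul_of_nonneg_right ht (by positivity)
    have k1 : |r₁ * r₂| ^ 2 * U ^ 2 ≤ M * U ^ 2 :=
      mul_le_mul_of_nonneg_right ht2 (sq_nonneg U)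
    have k2 : 2 * |r₁ * r₂| * |zS| ≤ 2 * M * |zS| :=
      mul_le_mul_of_nonneg_right h2tM (abs_nonneg zS)
    have k3 : (0:ℝ) ≤ M * |zS| := mul_nonneg hMpos.le (abs_nonneg zS)
    nlinarith [hmul]
  have hγρ : γ₂ + |ρ| ≤ 4 * M * (1 + U ^ 2 + |zS|) ∧ γ₁ + |ρ| ≤ 4 * M * (1 + U ^ 2 + |zS|) := by
    have k4 : (0:ℝ) ≤ M * U ^ 2 := mul_nonneg hMpos.le (sq_nonneg U)
    have k5 : (0:ℝ) ≤ M * |zS| := mul_nonneg hMpos.le (abs_nonneg zS)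
    constructor <;> nlinarith [hρb]
  -- eliminate
  have b1 : γ₁ * γ₂ / 2 * |a₁| ≤ (γ₂ + |ρ|) * ε' := by
    have key : (γ₁ * γ₂ - ρ ^ 2) * a₁ =
        γ₂ * (ρ * a₂ + γ₁ * a₁) + (-ρ) * (ρ * a₁ + γ₂ * a₂) := by ring
    have : |γ₁ * γ₂ - ρ ^ 2| * |a₁| ≤ (γ₂ + |ρ|) * ε' := by
      rw [← abs_mul, key]
      calc |γ₂ * (ρ * a₂ + γ₁ * a₁) + (-ρ) * (ρ * a₁ + γ₂ * a₂)|
          ≤ |γ₂ * (ρ * a₂ + γ₁ * a₁)| + |(-ρ) * (ρ * a₁ + γ₂ * a₂)| := abs_add_le _ _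
        _ ≤ γ₂ * ε' + |ρ| * ε' := by
            rw [abs_mul, abs_mul, abs_neg, abs_of_pos hγ₂]
            exact add_le_add (mul_le_mul_of_nonneg_left e1 hγ₂.le)
              (mul_le_mul_of_nonneg_left e2 (abs_nonneg ρ))
        _ = (γ₂ + |ρ|) * ε' := by ring
    calc γ₁ * γ₂ / 2 * |a₁| ≤ |γ₁ * γ₂ - ρ ^ 2| * |a₁| :=
          mul_le_mul_of_nonneg_right hdet (abs_nonneg _)
      _ ≤ _ := this
  have b2 : γ₁ * γ₂ / 2 * |a₂| ≤ (γ₁ + |ρ|) * ε' := by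
    have key : (γ₁ * γ₂ - ρ ^ 2) * a₂ =
        γ₁ * (ρ * a₁ + γ₂ * a₂) + (-ρ) * (ρ * a₂ + γ₁ * a₁) := by ring
    have : |γ₁ * γ₂ - ρ ^ 2| * |a₂| ≤ (γ₁ + |ρ|) * ε' := by
      rw [← abs_mul, key]
      calc |γ₁ * (ρ * a₁ + γ₂ * a₂) + (-ρ) * (ρ * a₂ + γ₁ * a₁)|
          ≤ |γ₁ * (ρ * a₁ + γ₂ * a₂)| + |(-ρ) * (ρ * a₂ + γ₁ * a₁)| := abs_add_le _ _
        _ ≤ γ₁ * ε' + |ρ| * ε' := by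
            rw [abs_mul, abs_mul, abs_neg, abs_of_pos hγ₁]
            exact add_le_add (mul_le_mul_of_nonneg_left e2 hγ₁.le)
              (mul_le_mul_of_nonneg_left e1 (abs_nonneg ρ))
        _ = (γ₁ + |ρ|) * ε' := by ring
    calc γ₁ * γ₂ / 2 * |a₂| ≤ |γ₁ * γ₂ - ρ ^ 2| * |a₂| :=
          mul_le_mul_of_nonneg_right hdet (abs_nonneg _)
      _ ≤ _ := this
  have hγγ : 0 < γ₁ * γ₂ := mul_pos hγ₁ hγ₂
  rw [max_le_iff]
  constructor
  · rw [le_div_iff₀ hγγ]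
    linarith [mul_le_mul_of_nonneg_right hγρ.1 hε'nn]
  · rw [le_div_iff₀ hγγ]
    linarith [mul_le_mul_of_nonneg_right hγρ.2 hε'nn]
end

section
/- Let r₁, r₂ be nonzero reals, z_S, z₀, a₁, a₂, b ∈ ℝ, γ₁, γ₂ > 0, ε_stat ≥ 0, U ≥ 0. Assume the approximate stationarity conditions: (i) |(r₁·a₁)² + (r₂·a₂)² + b + z₀| ≤ ε_stat; (ii) |(2·r₁·r₂·a₁·a₂ + z_S)·(2·r₁·r₂·a₂) + ((r₁·a₁)² + (r₂·a₂)² + b + z₀)·(2·r₁²·a₁) + γ₁·a₁| ≤ ε_stat; (iii) the same with the roles of the indices 1 and 2 swapped; (iv) |a₁| ≤ U and |a₂| ≤ U. Set ρ = (2·r₁·r₂·a₁·a₂ + z_S)·(2·r₁·r₂) and ε' = (1 + 2·max(r₁², r₂²)·U)·ε_stat. Assume furthermore: γ₁·γ₂/2 ≤ ρ² ≤ 3·γ₁·γ₂/2; |z_S| ≥ √3·max(γ₁, γ₂)/|r₁·r₂|; and ε' ≤ min(γ₁, γ₂)·√(|z_S|/|r₁·r₂|)/8. Then: (a) |z_S|/2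 ≤ |2·r₁·r₂·a₁·a₂| ≤ 2·|z_S|; (b) for each pair of distinct indices i, j ∈ {1,2}, (1/4)·|a_i| ≤ √(γ_j/γ_i)·|a_j| ≤ 4·|a_i|; (c) for each i ∈ {1,2}, (1/8)·√((min(γ₁,γ₂)/max(γ₁,γ₂))·|z_S|/|r₁·r₂|) ≤ |a_i| ≤ 4·√((max(γ₁,γ₂)/min(γ₁,γ₂))·|z_S|/|r₁·r₂|); and (d) |2·r₁·r₂·a₁·a₂ + z_S| ≤ 4·√(γ₁·γ₂)/|r₁·r₂|. -/
lemma two_aux_sqb_low (p g : ℝ) (hp : 0 ≤ p) (hg : 0 < g) (h : g^2/2 ≤ p^2) :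
    (2/3)*g ≤ p := by nlinarith

lemma two_aux_sqb_high (p g : ℝ) (hp : 0 ≤ p) (hg : 0 < g) (h : p^2 ≤ 3*g^2/2) :
    p ≤ (5/4)*g := by nlinarith

lemma two_aux_mxR (s3 mx R z : ℝ) (h : s3*mx ≤ z*R) (h3s : 1.7 ≤ s3) (hmx : 0 < mx) :
    1.7*mx ≤ R*z := by nlinarith

lemma two_aux_minsq (mn a c : ℝ) (h0 : 0 ≤ mn) (h1 : mn ≤ a) (h2 : mn ≤ c) :
    mn^2 ≤ a*c := by nlinarith

lemma two_aux_maxsq (mx a c : ℝ) (ha : 0 ≤ a) (hc : 0 ≤ c) (h1 : a ≤ mx) (h2 : c ≤ mx) :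
    a*c ≤ mx^2 := by nlinarith

lemma two_aux_Ple (x g mx R z : ℝ) (hR : 0 < R) (hx : 0 ≤ x) (hg : 0 < g)
    (h1 : x*(2*R) ≤ (5/4)*g) (h2 : g ≤ mx) (h3 : 1.7*mx ≤ R*z) : x ≤ z/2 := by
  have h4 : R*(2*x) ≤ R*z := by nlinarith
  have h5 := (mul_le_mul_iff_right₀ hR).mp h4
  linarith

lemma two_aux_smul (s2 s1 smn q mn g : ℝ) (hs2 : 0 ≤ s2) (hsmn : 0 ≤ smn) (hq : 0 ≤ q)
    (h1 : smn ≤ s1) (h2 : smn ≤ q) (h3 : smn^2 = mn) (h4 : g = s1*s2) :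
    s2*mn ≤ g*q := by
  have ha' : s2*smn ≤ s2*s1 := mul_le_mul_of_nonneg_left h1 hs2
  have hb' := mul_le_mul ha' h2 hsmn (by nlinarith)
  nlinarith

lemma two_aux_E (s2 mn σ ε g q : ℝ) (hs2 : 0 ≤ s2) (hσ : 0 ≤ σ)
    (h1 : ε ≤ mn*σ/8) (h2 : s2*mn ≤ g*q) : s2*ε ≤ g*q*σ/8 := by
  have h3 := mul_le_mul_of_nonneg_left h1 hs2
  have h4 := mul_le_mul_of_nonneg_right h2 (by linarith : (0:ℝ) ≤ σ/8)
  nlinarith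

lemma two_aux_B (s1 s2 g q σ p x y ε : ℝ) (hs2 : 0 ≤ s2)
    (h1 : s1^2*x ≤ p*y + ε) (hE : s2*ε ≤ g*q*σ/8) (hg : g = s1*s2) :
    g*(s1*x) ≤ p*(s2*y) + g*q*σ/8 := by
  subst hg
  have hm := mul_le_mul_of_nonneg_left h1 hs2
  nlinarith
set_option maxHeartbeats 1000000 in
lemma two_active_aux (u v p g q σ : ℝ) (hg : 0 < g) (hq : q^2 = g) (hq0 : 0 ≤ q)
    (hσ : 0 < σ) (hu0 : 0 ≤ u) (hv0 : 0 ≤ v)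
    (hpl : (2/3)*g ≤ p) (hph : p ≤ (5/4)*g)
    (B1 : g*u ≤ p*v + g*q*σ/8) (B3 : g*v ≤ p*u + g*q*σ/8)
    (Pl : g*σ^2/4 ≤ u*v) (Ph : u*v ≤ g*σ^2) :
    q*σ/4 ≤ u ∧ q*σ/4 ≤ v ∧ u ≤ 4*v ∧ v ≤ 4*u ∧ u ≤ 2*(q*σ) ∧ v ≤ 2*(q*σ) := by
  have hqpos : 0 < q := by nlinarith
  have hqσ : 0 < q*σ := mul_pos hqpos hσ
  have hp0 : 0 ≤ p := by nlinarith
  have hu : q*σ/4 ≤ u := by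
    by_contra h
    push_neg at h
    have h1 := mul_le_mul_of_nonneg_right B3 hu0
    have h2 := mul_le_mul_of_nonneg_right hph (sq_nonneg u)
    have h3 := mul_le_mul_of_nonneg_left h.le hu0
    have h4 := mul_lt_mul_of_pos_left h (mul_pos hg hqσ)
    nlinarith [mul_le_mul_of_nonneg_left h3 hg.le, sq_nonneg u]
  have hv : q*σ/4 ≤ v := by
    by_contra h
    push_neg at h
    have h1 := mul_le_mul_of_nonneg_right B1 hv0
    have h2 := mul_le_mul_of_nonneg_right hph (sq_nonneg v)
    have h3 := mul_le_mul_of_nonneg_left h.le hv0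
    have h4 := mul_lt_mul_of_pos_left h (mul_pos hg hqσ)
    nlinarith [mul_le_mul_of_nonneg_left h3 hg.le, sq_nonneg v]
  have huv : u ≤ 4*v := by
    nlinarith [mul_le_mul_of_nonneg_right hph hv0, hv]
  have hvu : v ≤ 4*u := by
    nlinarith [mul_le_mul_of_nonneg_right hph hu0, hu]
  have hu2 : u ≤ 2*(q*σ) := by
    have h1 : u*u ≤ 4*(g*σ^2) := by nlinarith [mul_le_mul_of_nonneg_left huv hu0]
    by_contra h
    push_neg at h
    nlinarith [mul_lt_mul_of_pos_left h hqσ]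
  have hv2 : v ≤ 2*(q*σ) := by
    have h1 : v*v ≤ 4*(g*σ^2) := by nlinarith [mul_le_mul_of_nonneg_left hvu hv0]
    by_contra h
    push_neg at h
    nlinarith [mul_lt_mul_of_pos_left h hqσ, mul_lt_mul_of_pos_right h hqσ, hq]
  exact ⟨hu, hv, huv, hvu, hu2, hv2⟩




set_option maxHeartbeats 1000000 in
/-- When the product feature is useful and the determinant condition
`γ₁γ₂/2 ≤ ρ² ≤ 3γ₁γ₂/2` holds, approximate stationarity of the regularized idealized loss
forces the trained neuron to become active, approximately computing the product monomial
with scaling close to `−z_S`. -/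
theorem two_active_inputs_useful_becomes_active
    (r₁ r₂ zS z₀ a₁ a₂ b γ₁ γ₂ εstat U : ℝ)
    (hr₁ : r₁ ≠ 0) (hr₂ : r₂ ≠ 0)
    (hγ₁ : 0 < γ₁) (hγ₂ : 0 < γ₂) (hε : 0 ≤ εstat) (hU : 0 ≤ U)
    (h1 : |(r₁ * a₁) ^ 2 + (r₂ * a₂) ^ 2 + b + z₀| ≤ εstat)
    (h2 : |(2 * r₁ * r₂ * a₁ * a₂ + zS) * (2 * r₁ * r₂ * a₂)
        + ((r₁ * a₁) ^ 2 + (r₂ * a₂) ^ 2 + b + z₀) * (2 * r₁ ^ 2 * a₁)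
        + γ₁ * a₁| ≤ εstat)
    (h3 : |(2 * r₁ * r₂ * a₁ * a₂ + zS) * (2 * r₁ * r₂ * a₁)
        + ((r₁ * a₁) ^ 2 + (r₂ * a₂) ^ 2 + b + z₀) * (2 * r₂ ^ 2 * a₂)
        + γ₂ * a₂| ≤ εstat)
    (h4 : |a₁| ≤ U) (h5 : |a₂| ≤ U)
    (hρlow : γ₁ * γ₂ / 2 ≤ ((2 * r₁ * r₂ * a₁ * a₂ + zS) * (2 * r₁ * r₂)) ^ 2)
    (hρhigh : ((2 * r₁ * r₂ * a₁ * a₂ + zS) * (2 * r₁ * r₂)) ^ 2 ≤ 3 * (γ₁ * γ₂) / 2)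
    (hzS : Real.sqrt 3 * max γ₁ γ₂ / |r₁ * r₂| ≤ |zS|)
    (hε' : (1 + 2 * max (r₁ ^ 2) (r₂ ^ 2) * U) * εstat
        ≤ min γ₁ γ₂ * Real.sqrt (|zS| / |r₁ * r₂|) / 8) :
    (|zS| / 2 ≤ |2 * r₁ * r₂ * a₁ * a₂| ∧ |2 * r₁ * r₂ * a₁ * a₂| ≤ 2 * |zS|) ∧
    ((1 / 4) * |a₁| ≤ Real.sqrt (γ₂ / γ₁) * |a₂| ∧ Real.sqrt (γ₂ / γ₁) * |a₂| ≤ 4 * |a₁|) ∧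
    ((1 / 4) * |a₂| ≤ Real.sqrt (γ₁ / γ₂) * |a₁| ∧ Real.sqrt (γ₁ / γ₂) * |a₁| ≤ 4 * |a₂|) ∧
    ((1 / 8) * Real.sqrt ((min γ₁ γ₂ / max γ₁ γ₂) * |zS| / |r₁ * r₂|) ≤ |a₁| ∧
      |a₁| ≤ 4 * Real.sqrt ((max γ₁ γ₂ / min γ₁ γ₂) * |zS| / |r₁ * r₂|)) ∧
    ((1 / 8) * Real.sqrt ((min γ₁ γ₂ / max γ₁ γ₂) * |zS| / |r₁ * r₂|) ≤ |a₂| ∧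
      |a₂| ≤ 4 * Real.sqrt ((max γ₁ γ₂ / min γ₁ γ₂) * |zS| / |r₁ * r₂|)) ∧
    |2 * r₁ * r₂ * a₁ * a₂ + zS| ≤ 4 * Real.sqrt (γ₁ * γ₂) / |r₁ * r₂| := by
  have hR : (0:ℝ) < |r₁ * r₂| := abs_pos.mpr (mul_ne_zero hr₁ hr₂)
  set R := |r₁ * r₂| with hRdef
  set mn := min γ₁ γ₂ with hmndef
  set mx := max γ₁ γ₂ with hmxdef
  have hmn0 : 0 < mn := lt_min hγ₁ hγ₂
  have hmx0 : 0 < mx := lt_of_lt_of_le hγ₁ (le_max_left _ _)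
  set g := Real.sqrt (γ₁ * γ₂) with hgdef
  have hg0 : 0 < g := Real.sqrt_pos.mpr (by positivity)
  have hgsq : g^2 = γ₁*γ₂ := Real.sq_sqrt (by positivity)
  set s1 := Real.sqrt γ₁ with hs1def
  set s2 := Real.sqrt γ₂ with hs2def
  have hs10 : 0 < s1 := Real.sqrt_pos.mpr hγ₁
  have hs20 : 0 < s2 := Real.sqrt_pos.mpr hγ₂
  have hs1sq : s1^2 = γ₁ := Real.sq_sqrt hγ₁.le
  have hs2sq : s2^2 = γ₂ := Real.sq_sqrt hγ₂.le
  have hgs : g = s1 * s2 := Real.sqrt_mul hγ₁.le γ₂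
  set q := Real.sqrt g with hqdef
  have hq0 : 0 ≤ q := Real.sqrt_nonneg _
  have hqsq : q^2 = g := Real.sq_sqrt hg0.le
  have h3s : (1.7:ℝ) ≤ Real.sqrt 3 := by
    nlinarith [Real.sq_sqrt (by norm_num : (0:ℝ) ≤ 3), Real.sqrt_nonneg 3]
  have hzS0 : 0 < |zS| := by
    refine lt_of_lt_of_le ?_ hzS
    positivity
  set σ := Real.sqrt (|zS| / R) with hσdef
  have hσ0 : 0 < σ := Real.sqrt_pos.mpr (div_pos hzS0 hR)
  have hσsq : σ^2 = |zS|/R := Real.sq_sqrt (by positivity)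
  have hmxR : 1.7 * mx ≤ R * |zS| :=
    two_aux_mxR _ _ _ _ ((div_le_iff₀ hR).mp hzS) h3s hmx0
  have hmng : mn ≤ g := by
    have h1' : mn^2 ≤ γ₁*γ₂ :=
      two_aux_minsq _ _ _ hmn0.le (min_le_left _ _) (min_le_right _ _)
    calc mn = Real.sqrt (mn^2) := (Real.sqrt_sq hmn0.le).symm
      _ ≤ g := Real.sqrt_le_sqrt h1'
  have hgmx : g ≤ mx := by
    have h1' : γ₁*γ₂ ≤ mx^2 :=
      two_aux_maxsq _ _ _ hγ₁.le hγ₂.le (le_max_left _ _) (le_max_right _ _)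
    calc g ≤ Real.sqrt (mx^2) := Real.sqrt_le_sqrt h1'
      _ = mx := Real.sqrt_sq hmx0.le
  set smn := Real.sqrt mn with hsmndef
  set smx := Real.sqrt mx with hsmxdef
  have hsmn0 : 0 < smn := Real.sqrt_pos.mpr hmn0
  have hsmx0 : 0 < smx := Real.sqrt_pos.mpr hmx0
  have hsmn_sq : smn^2 = mn := Real.sq_sqrt hmn0.le
  have hsmn_s1 : smn ≤ s1 := Real.sqrt_le_sqrt (min_le_left _ _)
  have hsmn_s2 : smn ≤ s2 := Real.sqrt_le_sqrt (min_le_right _ _)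
  have hsmn_q : smn ≤ q := Real.sqrt_le_sqrt hmng
  have hs1_smx : s1 ≤ smx := Real.sqrt_le_sqrt (le_max_left _ _)
  have hs2_smx : s2 ≤ smx := Real.sqrt_le_sqrt (le_max_right _ _)
  have hq_smx : q ≤ smx := Real.sqrt_le_sqrt hgmx
  -- rho
  set P := 2*r₁*r₂*a₁*a₂ + zS with hPdef
  set p := |P * (2*r₁*r₂)| with hpdef
  have hpsq : p^2 = (P*(2*r₁*r₂))^2 := sq_abs _
  have hp0 : 0 ≤ p := abs_nonneg _
  have hpl : (2/3)*g ≤ p := two_aux_sqb_low _ _ hp0 hg0 (by rw [hpsq, hgsq]; linarith)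
  have hph : p ≤ (5/4)*g := two_aux_sqb_high _ _ hp0 hg0 (by rw [hpsq, hgsq]; linarith)
  have hpR : p = |P| * (2*R) := by
    rw [hpdef, abs_mul, show (2*r₁*r₂) = 2*(r₁*r₂) from by ring, abs_mul, abs_two]
  have hPz : |P| * (2*R) ≤ (5/4)*g := by rw [← hpR]; exact hph
  have hPle : |P| ≤ |zS|/2 :=
    two_aux_Ple _ _ _ _ _ hR (abs_nonneg P) hg0 hPz hgmx hmxR
  -- part (a)
  have e0 : 2*r₁*r₂*a₁*a₂ = P - zS := by rw [hPdef]; ring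
  have haL : |zS|/2 ≤ |2*r₁*r₂*a₁*a₂| := by
    rw [e0]
    have h1' : |zS| - |P| ≤ |P - zS| := by
      rw [abs_sub_comm]; exact abs_sub_abs_le_abs_sub zS P
    linarith
  have haU : |2*r₁*r₂*a₁*a₂| ≤ 2*|zS| := by
    rw [e0]
    have h1' : |P - zS| ≤ |P| + |zS| := abs_sub P zS
    linarith
  -- product bounds
  have habs2 : |2*r₁*r₂*a₁*a₂| = 2*(R*|a₁*a₂|) := by
    rw [show 2*r₁*r₂*a₁*a₂ = 2*((r₁*r₂)*(a₁*a₂)) from by ring, abs_mul, abs_mul, abs_two,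
      hRdef]
  have hprodL : σ^2/4 ≤ |a₁*a₂| := by
    have h2' := haL
    rw [habs2] at h2'
    have e1 : σ^2/4 = |zS|/(R*4) := by rw [hσsq]; ring
    rw [e1, div_le_iff₀ (by positivity)]
    linarith
  have hprodU : |a₁*a₂| ≤ σ^2 := by
    have h2' := haU
    rw [habs2] at h2'
    rw [hσsq, le_div_iff₀ hR]
    linarith
  -- stationarity
  set D := (r₁ * a₁) ^ 2 + (r₂ * a₂) ^ 2 + b + z₀ with hDdef
  set ε' := (1 + 2 * max (r₁ ^ 2) (r₂ ^ 2) * U) * εstat with hε'def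
  have hmr0 : 0 ≤ max (r₁^2) (r₂^2) := le_trans (sq_nonneg r₁) (le_max_left _ _)
  have key1 : γ₁ * |a₁| ≤ p * |a₂| + ε' := by
    have hb1 : |D * (2*r₁^2*a₁)| ≤ 2*max (r₁^2) (r₂^2)*U*εstat := by
      rw [abs_mul]
      have hc : |2*r₁^2*a₁| ≤ 2*(max (r₁^2) (r₂^2)*U) := by
        rw [show (2:ℝ)*r₁^2*a₁ = 2*(r₁^2*a₁) from by ring, abs_mul, abs_two, abs_mul,
          abs_of_nonneg (sq_nonneg r₁)]
        have := mul_le_mul (le_max_left (r₁^2) (r₂^2)) h4 (abs_nonneg a₁) hmr0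
        linarith
      calc |D| * |2*r₁^2*a₁| ≤ εstat * (2*(max (r₁^2) (r₂^2)*U)) :=
            mul_le_mul h1 hc (abs_nonneg _) hε
        _ = 2*max (r₁^2) (r₂^2)*U*εstat := by ring
    have hstat : |P*(2*r₁*r₂)*a₂ + γ₁*a₁| ≤ ε' := by
      have e1 : P*(2*r₁*r₂)*a₂ + γ₁*a₁
          = (P * (2*r₁*r₂*a₂) + D * (2*r₁^2*a₁) + γ₁*a₁) - D*(2*r₁^2*a₁) := by ring
      rw [e1, hε'def]
      calc |(P * (2*r₁*r₂*a₂) + D * (2*r₁^2*a₁) + γ₁*a₁) - D*(2*r₁^2*a₁)|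
          ≤ |P * (2*r₁*r₂*a₂) + D * (2*r₁^2*a₁) + γ₁*a₁| + |D*(2*r₁^2*a₁)| :=
            abs_sub _ _
        _ ≤ εstat + 2*max (r₁^2) (r₂^2)*U*εstat := add_le_add h2 hb1
        _ = (1 + 2 * max (r₁ ^ 2) (r₂ ^ 2) * U) * εstat := by ring
    have h7 := abs_add_le (P*(2*r₁*r₂)*a₂ + γ₁*a₁) (-(P*(2*r₁*r₂)*a₂))
    rw [show (P*(2*r₁*r₂)*a₂ + γ₁*a₁) + (-(P*(2*r₁*r₂)*a₂)) = γ₁*a₁ from by ring,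
      abs_neg] at h7
    have e2 : |P*(2*r₁*r₂)*a₂| = p*|a₂| := by rw [abs_mul, ← hpdef]
    have e3 : |γ₁*a₁| = γ₁*|a₁| := by rw [abs_mul, abs_of_pos hγ₁]
    rw [e2, e3] at h7
    linarith
  have key2 : γ₂ * |a₂| ≤ p * |a₁| + ε' := by
    have hb1 : |D * (2*r₂^2*a₂)| ≤ 2*max (r₁^2) (r₂^2)*U*εstat := by
      rw [abs_mul]
      have hc : |2*r₂^2*a₂| ≤ 2*(max (r₁^2) (r₂^2)*U) := by
        rw [show (2:ℝ)*r₂^2*a₂ = 2*(r₂^2*a₂) from by ring, abs_mul, abs_two, abs_mul,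
          abs_of_nonneg (sq_nonneg r₂)]
        have := mul_le_mul (le_max_right (r₁^2) (r₂^2)) h5 (abs_nonneg a₂) hmr0
        linarith
      calc |D| * |2*r₂^2*a₂| ≤ εstat * (2*(max (r₁^2) (r₂^2)*U)) :=
            mul_le_mul h1 hc (abs_nonneg _) hε
        _ = 2*max (r₁^2) (r₂^2)*U*εstat := by ring
    have hstat : |P*(2*r₁*r₂)*a₁ + γ₂*a₂| ≤ ε' := by
      have e1 : P*(2*r₁*r₂)*a₁ + γ₂*a₂
          = (P * (2*r₁*r₂*a₁) + D * (2*r₂^2*a₂) + γ₂*a₂) - D*(2*r₂^2*a₂) := by ring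
      rw [e1, hε'def]
      calc |(P * (2*r₁*r₂*a₁) + D * (2*r₂^2*a₂) + γ₂*a₂) - D*(2*r₂^2*a₂)|
          ≤ |P * (2*r₁*r₂*a₁) + D * (2*r₂^2*a₂) + γ₂*a₂| + |D*(2*r₂^2*a₂)| :=
            abs_sub _ _
        _ ≤ εstat + 2*max (r₁^2) (r₂^2)*U*εstat := add_le_add h3 hb1
        _ = (1 + 2 * max (r₁ ^ 2) (r₂ ^ 2) * U) * εstat := by ring
    have h7 := abs_add_le (P*(2*r₁*r₂)*a₁ + γ₂*a₂) (-(P*(2*r₁*r₂)*a₁))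
    rw [show (P*(2*r₁*r₂)*a₁ + γ₂*a₂) + (-(P*(2*r₁*r₂)*a₁)) = γ₂*a₂ from by ring,
      abs_neg] at h7
    have e2 : |P*(2*r₁*r₂)*a₁| = p*|a₁| := by rw [abs_mul, ← hpdef]
    have e3 : |γ₂*a₂| = γ₂*|a₂| := by rw [abs_mul, abs_of_pos hγ₂]
    rw [e2, e3] at h7
    linarith
  -- error bounds
  have hεmn : ε' ≤ mn * σ / 8 := hε'
  have hs2mn : s2 * mn ≤ g * q :=
    two_aux_smul s2 s1 smn q mn g hs20.le hsmn0.le hq0 hsmn_s1 hsmn_q hsmn_sq hgs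
  have hs1mn : s1 * mn ≤ g * q :=
    two_aux_smul s1 s2 smn q mn g hs10.le hsmn0.le hq0 hsmn_s2 hsmn_q hsmn_sq
      (by rw [hgs]; ring)
  have hEs2 : s2 * ε' ≤ g*q*σ/8 := two_aux_E _ _ _ _ _ _ hs20.le hσ0.le hεmn hs2mn
  have hEs1 : s1 * ε' ≤ g*q*σ/8 := two_aux_E _ _ _ _ _ _ hs10.le hσ0.le hεmn hs1mn
  -- B inequalities
  have key1' : s1^2 * |a₁| ≤ p * |a₂| + ε' := by rw [hs1sq]; exact key1
  have key2' : s2^2 * |a₂| ≤ p * |a₁| + ε' := by rw [hs2sq]; exact key2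
  have B1 : g*(s1*|a₁|) ≤ p*(s2*|a₂|) + g*q*σ/8 :=
    two_aux_B s1 s2 g q σ p _ _ _ hs20.le key1' hEs2 hgs
  have B3 : g*(s2*|a₂|) ≤ p*(s1*|a₁|) + g*q*σ/8 :=
    two_aux_B s2 s1 g q σ p _ _ _ hs10.le key2' hEs1 (by rw [hgs]; ring)
  have huvEq : (s1*|a₁|)*(s2*|a₂|) = g*|a₁*a₂| := by rw [abs_mul, hgs]; ring
  have Pl : g*σ^2/4 ≤ (s1*|a₁|)*(s2*|a₂|) := by
    rw [huvEq]
    have := mul_le_mul_of_nonneg_left hprodL hg0.le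
    linarith
  have Ph : (s1*|a₁|)*(s2*|a₂|) ≤ g*σ^2 := by
    rw [huvEq]
    exact mul_le_mul_of_nonneg_left hprodU hg0.le
  obtain ⟨hu, hv, huv, hvu, hu2, hv2⟩ :=
    two_active_aux (s1*|a₁|) (s2*|a₂|) p g q σ hg0 hqsq hq0 hσ0 (by positivity)
      (by positivity) hpl hph B1 B3 Pl Ph
  -- conclusions
  have hsd21 : Real.sqrt (γ₂/γ₁) = s2/s1 := Real.sqrt_div hγ₂.le γ₁
  have hsd12 : Real.sqrt (γ₁/γ₂) = s1/s2 := Real.sqrt_div hγ₁.le γ₂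
  have hsqlow : Real.sqrt (mn / mx * |zS| / R) = smn/smx*σ := by
    rw [show mn / mx * |zS| / R = (mn/mx)*(|zS|/R) from by ring,
      Real.sqrt_mul (by positivity), Real.sqrt_div hmn0.le, ← hσdef, ← hsmndef, ← hsmxdef]
  have hsqhigh : Real.sqrt (mx / mn * |zS| / R) = smx/smn*σ := by
    rw [show mx / mn * |zS| / R = (mx/mn)*(|zS|/R) from by ring,
      Real.sqrt_mul (by positivity), Real.sqrt_div hmx0.le, ← hσdef, ← hsmndef, ← hsmxdef]
  refine ⟨⟨haL, haU⟩, ⟨?_, ?_⟩, ⟨?_, ?_⟩, ⟨?_, ?_⟩, ⟨?_, ?_⟩, ?_⟩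
  · rw [hsd21, show s2/s1 * |a₂| = s2 * |a₂| / s1 from by ring, le_div_iff₀ hs10]
    linarith [huv]
  · rw [hsd21, show s2/s1 * |a₂| = s2 * |a₂| / s1 from by ring, div_le_iff₀ hs10]
    linarith [hvu]
  · rw [hsd12, show s1/s2 * |a₁| = s1 * |a₁| / s2 from by ring, le_div_iff₀ hs20]
    linarith [hvu]
  · rw [hsd12, show s1/s2 * |a₁| = s1 * |a₁| / s2 from by ring, div_le_iff₀ hs20]
    linarith [huv]
  · rw [hsqlow, show (1/8 : ℝ) * (smn/smx*σ) = (smn*σ/8)/smx from by ring,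
      div_le_iff₀ hsmx0]
    have hkey : smn*s1 ≤ q*smx := mul_le_mul hsmn_q hs1_smx hs10.le hq0
    have final : s1*(smn*σ/8) ≤ s1*(|a₁| * smx) := by
      linarith [mul_le_mul_of_nonneg_right hkey hσ0.le,
        mul_le_mul_of_nonneg_right hu (le_of_lt hsmx0),
        mul_nonneg (mul_nonneg hs10.le (abs_nonneg a₁)) hsmx0.le]
    exact (mul_le_mul_iff_right₀ hs10).mp final
  · rw [hsqhigh, show (4:ℝ) * (smx/smn*σ) = (4*smx*σ)/smn from by ring, le_div_iff₀ hsmn0]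
    linarith [mul_le_mul_of_nonneg_right hsmn_s1 (abs_nonneg a₁), hu2,
      mul_le_mul_of_nonneg_right hq_smx hσ0.le, mul_nonneg hsmx0.le hσ0.le]
  · rw [hsqlow, show (1/8 : ℝ) * (smn/smx*σ) = (smn*σ/8)/smx from by ring,
      div_le_iff₀ hsmx0]
    have hkey : smn*s2 ≤ q*smx := mul_le_mul hsmn_q hs2_smx hs20.le hq0
    have final : s2*(smn*σ/8) ≤ s2*(|a₂| * smx) := by
      linarith [mul_le_mul_of_nonneg_right hkey hσ0.le,
        mul_le_mul_of_nonneg_right hv (le_of_lt hsmx0),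
        mul_nonneg (mul_nonneg hs20.le (abs_nonneg a₂)) hsmx0.le]
    exact (mul_le_mul_iff_right₀ hs20).mp final
  · rw [hsqhigh, show (4:ℝ) * (smx/smn*σ) = (4*smx*σ)/smn from by ring, le_div_iff₀ hsmn0]
    linarith [mul_le_mul_of_nonneg_right hsmn_s2 (abs_nonneg a₂), hv2,
      mul_le_mul_of_nonneg_right hq_smx hσ0.le, mul_nonneg hsmx0.le hσ0.le]
  · rw [le_div_iff₀ hR]
    linarith [hPz, hg0.le]
end

section
/- Let r₁, r₂, z_S, z₀ ∈ ℝ with r₁·r₂ ≠ 0 and z_S ≠ 0, and let η, τ > 0 with 4·τ ≤ η. Define ℓ̃(a₁, a₂, b) = ½·(2·r₁·r₂·a₁·a₂ + z_S)² + ½·(r₁²·a₁² + r₂²·a₂² + b + z₀)². Suppose: |a₁ˢ| ≤ τ and |a₂ˢ| ≤ τ; η/2 < |a₁ᵖ| ≤ η and η/2 < |a₂ᵖ| ≤ η; r₁·r₂·a₁ᵖ·a₂ᵖ·z_S < 0; |bᵖ| ≤ √(|r₁·r₂·z_S|)·η/8; 2·|r₁·r₂|·η² ≤ |z_S|/16;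 and |r₁·r₂|·η²·|z_S| ≥ 16·(r₁²·η² + r₂²·η² + |z₀|)². Then for every real bˢ, ℓ̃(a₁ˢ, a₂ˢ, bˢ) − ℓ̃(a₁ᵖ, a₂ᵖ, bᵖ) ≥ (1/32)·|r₁·r₂|·η²·|z_S|. -/
set_option maxHeartbeats 1600000


/-- A well-initialized random perturbation has strictly smaller idealized loss than any
near-zero (pruned) parameter setting, by a margin `(1/32)·|r₁r₂|·η²·|z_S|`. -/
theorem perturbed_loss_smaller_than_pruned_loss
    (r₁ r₂ zS z₀ η τ a₁s a₂s a₁p a₂p bp : ℝ)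
    (hr : r₁ * r₂ ≠ 0) (hz : zS ≠ 0) (hη : 0 < η) (hτ : 0 < τ) (hτη : 4 * τ ≤ η)
    (hs1 : |a₁s| ≤ τ) (hs2 : |a₂s| ≤ τ)
    (hp1 : η / 2 < |a₁p|) (hp1' : |a₁p| ≤ η)
    (hp2 : η / 2 < |a₂p|) (hp2' : |a₂p| ≤ η)
    (hsign : r₁ * r₂ * a₁p * a₂p * zS < 0)
    (hbp : |bp| ≤ Real.sqrt |r₁ * r₂ * zS| * η / 8)
    (hη2 : 2 * |r₁ * r₂| * η ^ 2 ≤ |zS| / 16)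
    (hbig : 16 * (r₁ ^ 2 * η ^ 2 + r₂ ^ 2 * η ^ 2 + |z₀|) ^ 2 ≤ |r₁ * r₂| * η ^ 2 * |zS|) :
    ∀ bs : ℝ,
      (1 / 32) * |r₁ * r₂| * η ^ 2 * |zS|
        ≤ ((1 / 2) * (2 * r₁ * r₂ * a₁s * a₂s + zS) ^ 2
              + (1 / 2) * (r₁ ^ 2 * a₁s ^ 2 + r₂ ^ 2 * a₂s ^ 2 + bs + z₀) ^ 2)
          - ((1 / 2) * (2 * r₁ * r₂ * a₁p * a₂p + zS) ^ 2
              + (1 / 2) * (r₁ ^ 2 * a₁p ^ 2 + r₂ ^ 2 * a₂p ^ 2 + bp + z₀) ^ 2) := by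
  intro bs
  have hA : (0:ℝ) < |r₁ * r₂| := abs_pos.mpr hr
  have hZ : (0:ℝ) < |zS| := abs_pos.mpr hz
  -- ### Step 1: lower bound on the pruned loss first term
  have hss : |a₁s * a₂s| ≤ η ^ 2 / 16 := by
    rw [abs_mul]
    have h1 : |a₁s| * |a₂s| ≤ τ * τ :=
      mul_le_mul hs1 hs2 (abs_nonneg _) (le_trans (abs_nonneg _) hs1)
    nlinarith
  have hxz : -(2 * |r₁ * r₂| * (η ^ 2 / 16) * |zS|) ≤ (2 * r₁ * r₂ * a₁s * a₂s) * zS := by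
    have h1 : |(2 * r₁ * r₂ * a₁s * a₂s) * zS| = 2 * |r₁ * r₂| * |a₁s * a₂s| * |zS| := by
      simp only [abs_mul, abs_two]
      ring
    have h2 := neg_abs_le ((2 * r₁ * r₂ * a₁s * a₂s) * zS)
    rw [h1] at h2
    nlinarith [mul_le_mul_of_nonneg_left hss (le_of_lt (mul_pos hA hZ)), h2]
  have h_s1 : zS ^ 2 - (|r₁ * r₂| * η ^ 2 * |zS|) / 4
      ≤ (2 * r₁ * r₂ * a₁s * a₂s + zS) ^ 2 := by
    nlinarith [sq_nonneg (2 * r₁ * r₂ * a₁s * a₂s), hxz]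
  -- ### Step 2: upper bound on the perturbed first term
  have hPz : (r₁ * r₂ * a₁p * a₂p) * zS = -(|r₁ * r₂| * |a₁p * a₂p| * |zS|) := by
    have hneg : (r₁ * r₂ * a₁p * a₂p) * zS < 0 := hsign
    have h1 : |(r₁ * r₂ * a₁p * a₂p) * zS| = |r₁ * r₂| * |a₁p * a₂p| * |zS| := by
      simp only [abs_mul]
      ring
    have h2 := abs_of_neg hneg
    rw [h1] at h2
    linarith
  have hpp_lo : η ^ 2 / 4 < |a₁p * a₂p| := by
    rw [abs_mul]
    have := mul_lt_mul'' hp1 hp2 (by linarith) (by linarith)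
    nlinarith
  have hpp_hi : |a₁p * a₂p| ≤ η ^ 2 := by
    rw [abs_mul]
    have := mul_le_mul hp1' hp2' (abs_nonneg _) (le_of_lt hη)
    nlinarith
  have hw0 : 0 ≤ |r₁ * r₂| * |a₁p * a₂p| := mul_nonneg (abs_nonneg _) (abs_nonneg _)
  have hw2 : |r₁ * r₂| * |a₁p * a₂p| ≤ |zS| / 32 := by
    linarith [mul_le_mul_of_nonneg_left hpp_hi hA.le]
  have hw1 : |r₁ * r₂| * η ^ 2 / 4 ≤ |r₁ * r₂| * |a₁p * a₂p| := by
    linarith [mul_le_mul_of_nonneg_left hpp_lo.le hA.le]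
  have hP2 : (r₁ * r₂ * a₁p * a₂p) ^ 2 = (|r₁ * r₂| * |a₁p * a₂p|) ^ 2 := by
    rw [← abs_mul, sq_abs]; ring
  have h_p1 : (2 * r₁ * r₂ * a₁p * a₂p + zS) ^ 2
      ≤ zS ^ 2 - (31 / 32) * (|r₁ * r₂| * η ^ 2 * |zS|) := by
    have h4P2 : 4 * (r₁ * r₂ * a₁p * a₂p) ^ 2
        ≤ 4 * (|r₁ * r₂| * |a₁p * a₂p|) * (|zS| / 32) := by
      rw [hP2]; nlinarith [mul_le_mul_of_nonneg_left hw2 hw0]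
    have hwz := mul_le_mul_of_nonneg_right hw1 hZ.le
    nlinarith [hPz, h4P2, hwz]
  -- ### Step 3: upper bound on the perturbed second term
  have ha1p2 : a₁p ^ 2 ≤ η ^ 2 := by nlinarith [sq_abs a₁p, abs_nonneg a₁p]
  have ha2p2 : a₂p ^ 2 ≤ η ^ 2 := by nlinarith [sq_abs a₂p, abs_nonneg a₂p]
  have hS2 : (r₁ ^ 2 * a₁p ^ 2 + r₂ ^ 2 * a₂p ^ 2 + bp + z₀) ^ 2
      ≤ ((r₁ ^ 2 * η ^ 2 + r₂ ^ 2 * η ^ 2 + |z₀|) + |bp|) ^ 2 := by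
    apply sq_le_sq'
    · nlinarith [neg_abs_le bp, neg_abs_le z₀, mul_nonneg (sq_nonneg r₁) (sq_nonneg a₁p),
        mul_nonneg (sq_nonneg r₂) (sq_nonneg a₂p), mul_nonneg (sq_nonneg r₁) (sq_nonneg η),
        mul_nonneg (sq_nonneg r₂) (sq_nonneg η)]
    · nlinarith [le_abs_self bp, le_abs_self z₀,
        mul_le_mul_of_nonneg_left ha1p2 (sq_nonneg r₁),
        mul_le_mul_of_nonneg_left ha2p2 (sq_nonneg r₂)]
  have hB2 : bp ^ 2 ≤ |r₁ * r₂| * η ^ 2 * |zS| / 64 := by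
    have hs : Real.sqrt |r₁ * r₂ * zS| ^ 2 = |r₁ * r₂ * zS| := Real.sq_sqrt (abs_nonneg _)
    have habs : |r₁ * r₂ * zS| = |r₁ * r₂| * |zS| := by
      rw [show r₁ * r₂ * zS = (r₁ * r₂) * zS by ring, abs_mul]
    nlinarith [mul_self_le_mul_self (abs_nonneg bp) hbp, sq_abs bp,
      Real.sqrt_nonneg |r₁ * r₂ * zS|]
  have hQ2 : (r₁ ^ 2 * η ^ 2 + r₂ ^ 2 * η ^ 2 + |z₀|) ^ 2
      ≤ |r₁ * r₂| * η ^ 2 * |zS| / 16 := by linarith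
  have h_p2 : (r₁ ^ 2 * a₁p ^ 2 + r₂ ^ 2 * a₂p ^ 2 + bp + z₀) ^ 2
      ≤ (5 / 32) * (|r₁ * r₂| * η ^ 2 * |zS|) := by
    nlinarith [hS2, hB2, hQ2, sq_abs bp,
      sq_nonneg ((r₁ ^ 2 * η ^ 2 + r₂ ^ 2 * η ^ 2 + |z₀|) - |bp|)]
  -- ### Combine
  have hM : (0:ℝ) < |r₁ * r₂| * η ^ 2 * |zS| := by positivity
  linarith [h_s1, h_p1, h_p2, sq_nonneg (r₁ ^ 2 * a₁s ^ 2 + r₂ ^ 2 * a₂s ^ 2 + bs + z₀)]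
end

section
/- There exists a universal constant C > 0 with the following property. Let n be a natural number, S₁ ≠ S₂ subsets of Fin n, r₁, r₂ ∈ ℝ, and let h₁, h₂, ζ be real-valued functions on the hypercube {-1,1}^n such that for each i ∈ {1,2}: E[h_i·χ_{S_i}] = 0 and |h_i(x)| ≤ |r_i|·ε_i for all x, where 0 ≤ ε_i ≤ 1. Let F, Z ≥ 0 satisfy |r_i·χ_{S_i}(x) + h_i(x)| ≤ F for all x and i, and |ζ(x)| ≤ Z for all x. For a₁, a₂, b ∈ ℝ set A = max(|a₁|, |a₂|, |b|), and define ℓ = ½·E[((a₁·(r₁·χ_{S₁} + h₁) + a₂·(r₂·χ_{S₂} + h₂))² + b + ζ)²] and ℓ̃ = ½·E[((a₁·r₁·χ_{S₁} + a₂·r₂·χ_{S₂})² + b + ζ)²]. Then |ℓ − ℓ̃| ≤ C·(A⁴ + 1)·(F + Z + 1)⁴·(ε₁ + ε₂). -/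
lemma hyp_pt_mem {n : ℕ} (σ : Fin n → Bool) :
    ∀ i, (fun j => if σ j then (1:ℝ) else -1) i = 1 ∨
         (fun j => if σ j then (1:ℝ) else -1) i = -1 := by
  intro i; by_cases h : σ i <;> simp [h]

lemma hypE_congr' {n : ℕ} {f g : (Fin n → ℝ) → ℝ}
    (h : ∀ x, (∀ i, x i = 1 ∨ x i = -1) → f x = g x) : hypE f = hypE g := by
  unfold hypE; congr 1
  exact Finset.sum_congr rfl fun σ _ => h _ (hyp_pt_mem σ)

lemma hypE_sub' {n : ℕ} (f g : (Fin n → ℝ) → ℝ) :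
    hypE (fun x => f x - g x) = hypE f - hypE g := by
  simp [hypE, Finset.sum_sub_distrib, mul_sub]

lemma hypE_add' {n : ℕ} (f g : (Fin n → ℝ) → ℝ) :
    hypE (fun x => f x + g x) = hypE f + hypE g := by
  simp [hypE, Finset.sum_add_distrib, mul_add]

lemma hypE_const' {n : ℕ} (c : ℝ) : hypE (fun _ : Fin n → ℝ => c) = c := by
  simp [hypE, Finset.sum_const, Finset.card_univ]

lemma hypE_abs_le' {n : ℕ} {g : (Fin n → ℝ) → ℝ} {M : ℝ}
    (h : ∀ x, (∀ i, x i = 1 ∨ x i = -1) → |g x| ≤ M) : |hypE g| ≤ M := by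
  have h2 : (0:ℝ) < 2 ^ n := by positivity
  have hb : |∑ σ : Fin n → Bool, g (fun i => if σ i then 1 else -1)| ≤ (2:ℝ)^n * M := by
    calc |∑ σ : Fin n → Bool, g (fun i => if σ i then 1 else -1)|
        ≤ ∑ σ : Fin n → Bool, |g (fun i => if σ i then 1 else -1)| :=
          Finset.abs_sum_le_sum_abs _ _
      _ ≤ ∑ _σ : Fin n → Bool, M := Finset.sum_le_sum fun σ _ => h _ (hyp_pt_mem σ)
      _ = (2:ℝ)^n * M := by
          simp [Finset.sum_const, Finset.card_univ, nsmul_eq_mul]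
  have heq : |hypE g| = ((2:ℝ)^n)⁻¹ * |∑ σ : Fin n → Bool, g (fun i => if σ i then 1 else -1)| := by
    rw [hypE, abs_mul, abs_of_pos (inv_pos.mpr h2)]
  rw [heq]
  calc ((2:ℝ)^n)⁻¹ * |∑ σ : Fin n → Bool, g (fun i => if σ i then 1 else -1)|
      ≤ ((2:ℝ)^n)⁻¹ * ((2:ℝ)^n * M) := mul_le_mul_of_nonneg_left hb (by positivity)
    _ = M := by field_simp

lemma abs_walsh' {n : ℕ} (S : Finset (Fin n)) {x : Fin n → ℝ}
    (hx : ∀ i, x i = 1 ∨ x i = -1) : |walsh S x| = 1 := by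
  rw [walsh, Finset.abs_prod]
  apply Finset.prod_eq_one
  intro i _
  rcases hx i with h | h <;> simp [h]

lemma abs_r_le' {n : ℕ} (S : Finset (Fin n)) (r F : ℝ) (h : (Fin n → ℝ) → ℝ)
    (horth : hypE (fun x => h x * walsh S x) = 0)
    (hbd : ∀ x, (∀ i, x i = 1 ∨ x i = -1) → |r * walsh S x + h x| ≤ F) :
    |r| ≤ F := by
  have hval : hypE (fun x => (r * walsh S x + h x) * walsh S x) = r := by
    have h1 : hypE (fun x => (r * walsh S x + h x) * walsh S x)
        = hypE (fun x => r + h x * walsh S x) := by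
      apply hypE_congr'
      intro x hx
      have hw : walsh S x * walsh S x = 1 := by
        rcases (abs_eq (by norm_num : (0:ℝ) ≤ 1)).1 (abs_walsh' S hx) with h' | h' <;>
          rw [h'] <;> norm_num
      calc (r * walsh S x + h x) * walsh S x
          = r * (walsh S x * walsh S x) + h x * walsh S x := by ring
        _ = r + h x * walsh S x := by rw [hw]; ring
    rw [h1, hypE_add', hypE_const', horth, add_zero]
  rw [← hval]
  apply hypE_abs_le'
  intro x hx
  rw [abs_mul, abs_walsh' S hx, mul_one]
  exact hbd x hx

lemma final_num' (A F Z : ℝ) (hF : 0 ≤ F) (hZ : 0 ≤ Z) :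
    16*A^4*F^4 + 4*A^3*F^2 + 4*A^2*F^2*Z ≤ 24*((A^4+1)*(F+Z+1)^4) := by
  set B := F + Z + 1 with hBdef
  have hB1 : 1 ≤ B := by simp [hBdef]; linarith
  have hB0 : 0 ≤ B := by linarith
  have p1 : F^4 ≤ B^4 := pow_le_pow_left₀ hF (by linarith) 4
  have p2 : F^2 ≤ B^4 := by
    have h1 : F^2 ≤ B^2 := pow_le_pow_left₀ hF (by linarith) 2
    have h2 : B^2 ≤ B^4 := pow_le_pow_right₀ hB1 (by norm_num)
    linarith
  have p3 : F^2*Z ≤ B^4 := by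
    have h1 : F^2*Z ≤ B^2*B :=
      mul_le_mul (pow_le_pow_left₀ hF (by linarith) 2) (by linarith) hZ (by positivity)
    have h2 : B^2*B ≤ B^4 := by
      calc B^2*B = B^3 := by ring
        _ ≤ B^4 := pow_le_pow_right₀ hB1 (by norm_num)
    linarith
  have a2 : A^3 ≤ A^4+1 := by
    nlinarith [sq_nonneg (A^2-A), sq_nonneg (A-1), sq_nonneg A, sq_nonneg (A^2-1)]
  have a3 : A^2 ≤ A^4+1 := by nlinarith [sq_nonneg (A^2-1)]
  have q1 : A^4*F^4 ≤ (A^4+1)*B^4 :=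
    mul_le_mul (by linarith) p1 (by positivity) (by positivity)
  have q2 : A^3*F^2 ≤ (A^4+1)*B^4 :=
    mul_le_mul a2 p2 (by positivity) (by positivity)
  have q3 : A^2*(F^2*Z) ≤ (A^4+1)*B^4 :=
    mul_le_mul a3 p3 (by positivity) (by positivity)
  nlinarith [q1, q2, q3]


/-- The true loss of a quadratic neuron with noisy monomial inputs is close to the
idealized loss obtained by setting the input noises to zero: there is a universal constant
`C` such that `|ℓ − ℓ̃| ≤ C·(A⁴ + 1)·(F + Z + 1)⁴·(ε₁ + ε₂)`. -/
theorem idealized_loss_close_to_true_loss :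
    ∃ C : ℝ, 0 < C ∧
      ∀ (n : ℕ) (S₁ S₂ : Finset (Fin n)), S₁ ≠ S₂ →
      ∀ (r₁ r₂ ε₁ ε₂ F Z : ℝ) (h₁ h₂ ζ : (Fin n → ℝ) → ℝ),
        0 ≤ ε₁ → ε₁ ≤ 1 → 0 ≤ ε₂ → ε₂ ≤ 1 → 0 ≤ F → 0 ≤ Z →
        hypE (fun x => h₁ x * walsh S₁ x) = 0 →
        hypE (fun x => h₂ x * walsh S₂ x) = 0 →
        (∀ x : Fin n → ℝ, (∀ i, x i = 1 ∨ x i = -1) → |h₁ x| ≤ |r₁| * ε₁) →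
        (∀ x : Fin n → ℝ, (∀ i, x i = 1 ∨ x i = -1) → |h₂ x| ≤ |r₂| * ε₂) →
        (∀ x : Fin n → ℝ, (∀ i, x i = 1 ∨ x i = -1) →
          |r₁ * walsh S₁ x + h₁ x| ≤ F) →
        (∀ x : Fin n → ℝ, (∀ i, x i = 1 ∨ x i = -1) →
          |r₂ * walsh S₂ x + h₂ x| ≤ F) →
        (∀ x : Fin n → ℝ, (∀ i, x i = 1 ∨ x i = -1) → |ζ x| ≤ Z) →
        ∀ a₁ a₂ b : ℝ,
          |(1 / 2) * hypE (fun x =>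
              ((a₁ * (r₁ * walsh S₁ x + h₁ x) + a₂ * (r₂ * walsh S₂ x + h₂ x)) ^ 2
                + b + ζ x) ^ 2)
            - (1 / 2) * hypE (fun x =>
              ((a₁ * (r₁ * walsh S₁ x) + a₂ * (r₂ * walsh S₂ x)) ^ 2 + b + ζ x) ^ 2)|
          ≤ C * ((max (max |a₁| |a₂|) |b|) ^ 4 + 1) * (F + Z + 1) ^ 4 * (ε₁ + ε₂) := by
  refine ⟨24, by norm_num, ?_⟩
  intro n S₁ S₂ _hS r₁ r₂ ε₁ ε₂ F Z h₁ h₂ ζ hε₁0 hε₁1 hε₂0 hε₂1 hF hZ horth₁ horth₂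
    hh₁ hh₂ hb₁ hb₂ hζ a₁ a₂ b
  set A : ℝ := max (max |a₁| |a₂|) |b| with hAdef
  have hA0 : 0 ≤ A := le_trans (abs_nonneg a₁) (le_trans (le_max_left _ _) (le_max_left _ _))
  have hA1 : |a₁| ≤ A := le_trans (le_max_left _ _) (le_max_left _ _)
  have hA2 : |a₂| ≤ A := le_trans (le_max_right _ _) (le_max_left _ _)
  have hAb : |b| ≤ A := le_max_right _ _
  have hr₁ : |r₁| ≤ F := abs_r_le' S₁ r₁ F h₁ horth₁ hb₁
  have hr₂ : |r₂| ≤ F := abs_r_le' S₂ r₂ F h₂ horth₂ hb₂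
  set f : (Fin n → ℝ) → ℝ := fun x =>
    ((a₁ * (r₁ * walsh S₁ x + h₁ x) + a₂ * (r₂ * walsh S₂ x + h₂ x)) ^ 2 + b + ζ x) ^ 2
    with hfdef
  set g : (Fin n → ℝ) → ℝ := fun x =>
    ((a₁ * (r₁ * walsh S₁ x) + a₂ * (r₂ * walsh S₂ x)) ^ 2 + b + ζ x) ^ 2 with hgdef
  have hEq : (1/2 : ℝ) * hypE f - (1/2) * hypE g = (1/2) * hypE (fun x => f x - g x) := by
    rw [hypE_sub']; ring
  rw [hEq, abs_mul, abs_of_pos (by norm_num : (0:ℝ) < 1/2)]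
  set M : ℝ := (A*F*(ε₁+ε₂)) * (4*(A*F)) * (8*(A*F)^2+2*A+2*Z) with hMdef
  have hpt : ∀ x : Fin n → ℝ, (∀ i, x i = 1 ∨ x i = -1) → |f x - g x| ≤ M := by
    intro x hx
    set P := r₁ * walsh S₁ x with hP
    set Q := r₂ * walsh S₂ x with hQ
    set u := a₁ * (P + h₁ x) + a₂ * (Q + h₂ x) with hu
    set v := a₁ * P + a₂ * Q with hv
    set w := b + ζ x with hw
    have hPb : |P| ≤ F := by
      rw [hP, abs_mul, abs_walsh' S₁ hx, mul_one]; exact hr₁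
    have hQb : |Q| ≤ F := by
      rw [hQ, abs_mul, abs_walsh' S₂ hx, mul_one]; exact hr₂
    have hH1 : |h₁ x| ≤ F * ε₁ :=
      le_trans (hh₁ x hx) (mul_le_mul_of_nonneg_right hr₁ hε₁0)
    have hH2 : |h₂ x| ≤ F * ε₂ :=
      le_trans (hh₂ x hx) (mul_le_mul_of_nonneg_right hr₂ hε₂0)
    have hPH1 : |P + h₁ x| ≤ F := hb₁ x hx
    have hPH2 : |Q + h₂ x| ≤ F := hb₂ x hx
    have hub : |u| ≤ 2*(A*F) := by
      calc |u| ≤ |a₁ * (P + h₁ x)| + |a₂ * (Q + h₂ x)| := abs_add_le _ _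
        _ = |a₁| * |P + h₁ x| + |a₂| * |Q + h₂ x| := by
            rw [abs_mul a₁ (P + h₁ x), abs_mul a₂ (Q + h₂ x)]
        _ ≤ A * F + A * F := add_le_add
            (mul_le_mul hA1 hPH1 (abs_nonneg _) hA0)
            (mul_le_mul hA2 hPH2 (abs_nonneg _) hA0)
        _ = 2*(A*F) := by ring
    have hvb : |v| ≤ 2*(A*F) := by
      calc |v| ≤ |a₁ * P| + |a₂ * Q| := abs_add_le _ _
        _ = |a₁| * |P| + |a₂| * |Q| := by rw [abs_mul a₁ P, abs_mul a₂ Q]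
        _ ≤ A * F + A * F := add_le_add
            (mul_le_mul hA1 hPb (abs_nonneg _) hA0)
            (mul_le_mul hA2 hQb (abs_nonneg _) hA0)
        _ = 2*(A*F) := by ring
    have huv : |u - v| ≤ A*F*(ε₁+ε₂) := by
      have : u - v = a₁ * h₁ x + a₂ * h₂ x := by rw [hu, hv]; ring
      rw [this]
      calc |a₁ * h₁ x + a₂ * h₂ x| ≤ |a₁ * h₁ x| + |a₂ * h₂ x| := abs_add_le _ _
        _ = |a₁| * |h₁ x| + |a₂| * |h₂ x| := by rw [abs_mul a₁ (h₁ x), abs_mul a₂ (h₂ x)]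
        _ ≤ A * (F * ε₁) + A * (F * ε₂) := add_le_add
            (mul_le_mul hA1 hH1 (abs_nonneg _) hA0)
            (mul_le_mul hA2 hH2 (abs_nonneg _) hA0)
        _ = A*F*(ε₁+ε₂) := by ring
    have hwb : |w| ≤ A + Z := by
      calc |w| ≤ |b| + |ζ x| := abs_add_le _ _
        _ ≤ A + Z := add_le_add hAb (hζ x hx)
    have hsum : |u^2 + v^2 + 2*w| ≤ 8*(A*F)^2 + 2*A + 2*Z := by
      calc |u^2 + v^2 + 2*w| ≤ |u^2| + |v^2| + |2*w| := abs_add_three _ _ _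
        _ = |u|^2 + |v|^2 + 2*|w| := by
            rw [abs_pow u 2, abs_pow v 2, abs_mul 2 w, abs_two]
        _ ≤ (2*(A*F))^2 + (2*(A*F))^2 + 2*(A+Z) := by
            refine add_le_add (add_le_add ?_ ?_) ?_
            · exact pow_le_pow_left₀ (abs_nonneg _) hub 2
            · exact pow_le_pow_left₀ (abs_nonneg _) hvb 2
            · linarith
        _ = 8*(A*F)^2 + 2*A + 2*Z := by ring
    have hfg : f x - g x = (u - v) * (u + v) * (u^2 + v^2 + 2*w) := by
      simp only [hfdef, hgdef, hu, hv, hw, hP, hQ]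
      ring
    rw [hfg, abs_mul, abs_mul, hMdef]
    have huvs : |u + v| ≤ 4*(A*F) := by
      calc |u + v| ≤ |u| + |v| := abs_add_le _ _
        _ ≤ 2*(A*F) + 2*(A*F) := add_le_add hub hvb
        _ = 4*(A*F) := by ring
    have hAF : (0:ℝ) ≤ A*F := mul_nonneg hA0 hF
    refine mul_le_mul (mul_le_mul huv huvs (abs_nonneg _) ?_) hsum (abs_nonneg _) ?_
    · positivity
    · positivity
  have hEbd : |hypE (fun x => f x - g x)| ≤ M := hypE_abs_le' hpt
  calc (1/2 : ℝ) * |hypE (fun x => f x - g x)| ≤ (1/2) * M :=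
        mul_le_mul_of_nonneg_left hEbd (by norm_num)
    _ ≤ 24 * (A ^ 4 + 1) * (F + Z + 1) ^ 4 * (ε₁ + ε₂) := by
        have hkey := final_num' A F Z hF hZ
        have hε : 0 ≤ ε₁ + ε₂ := by linarith
        have hexp : (1/2 : ℝ) * M = (ε₁+ε₂) * (16*A^4*F^4 + 4*A^3*F^2 + 4*A^2*F^2*Z) := by
          rw [hMdef]; ring
        rw [hexp]
        calc (ε₁+ε₂) * (16*A^4*F^4 + 4*A^3*F^2 + 4*A^2*F^2*Z)
            ≤ (ε₁+ε₂) * (24*((A^4+1)*(F+Z+1)^4)) :=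
              mul_le_mul_of_nonneg_left hkey hε
          _ = 24 * (A ^ 4 + 1) * (F + Z + 1) ^ 4 * (ε₁ + ε₂) := by ring
end
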